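/- arXiv:1312.7066 — 3 statements merged into one kernel-verified Lean document; each statement's English description precedes it below -/
import Mathlib

section
/- Let R be a crystallographic root system that is not simply laced, with highest short root β₀ (with respect to a fixed base). Then there exists a simple root α such that β₀ + α is a root and ⟨β₀ + α, α∨⟩ ≥ 2; consequently s_α(β₀ + α) is a positive root β with s_α·β = β₀ for the dot action (i.e., s_α(β + ρ) - ρ = β₀). -/
open scoped InnerProductSpace

variable {V : Type*} [NormedAddCommGroup V] [InnerProductSpace ℝ V]

/-- The Cartan integer `⟨β, α∨⟩ = 2(β,α)/(α,α)`. -/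
noncomputable def cartanInt (β α : V) : ℝ := 2 * ⟪β, α⟫_ℝ / ⟪α, α⟫_ℝ

/-- The reflection in the root `α`, as a function. -/
noncomputable def preRefl (α v : V) : V := v - cartanInt v α • α

/-- A (reduced, crystallographic) root system in a real inner product space. -/
structure IsRootSystem (R : Set V) : Prop where
  finite : R.Finite
  nonempty : R.Nonempty
  ne_zero : ∀ α ∈ R, α ≠ 0
  reflect_mem : ∀ α ∈ R, ∀ β ∈ R, preRefl α β ∈ R
  crystallographic : ∀ α ∈ R, ∀ β ∈ R, ∃ n : ℤ, cartanInt β α = (n : ℝ)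
  reduced : ∀ α ∈ R, ∀ t : ℝ, t • α ∈ R → t = 1 ∨ t = -1

/-- `β` is a nonnegative integer combination of elements of `S`. -/
def NonnegComb (S : Set V) (β : V) : Prop :=
  ∃ c : V →₀ ℕ, ↑c.support ⊆ S ∧ β = c.sum fun v n => (n : ℝ) • v

/-- `β` is an integer combination of elements of `S`. -/
def IntComb (S : Set V) (β : V) : Prop :=
  ∃ c : V →₀ ℤ, ↑c.support ⊆ S ∧ β = c.sum fun v n => (n : ℝ) • v

/-- `S` is a base (set of simple roots) of the root system `R`. -/
structure IsBase (R S : Set V) : Prop where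
  subset : S ⊆ R
  indep : LinearIndependent ℝ ((↑) : S → V)
  pos_or_neg : ∀ β ∈ R, NonnegComb S β ∨ NonnegComb S (-β)

/-- All roots have the same length. -/
def IsSimplyLaced (R : Set V) : Prop := ∀ α ∈ R, ∀ β ∈ R, ‖α‖ = ‖β‖

/-- `R` is irreducible: it admits no orthogonal decomposition. -/
def IsIrreducibleRS (R : Set V) : Prop :=
  ∀ R₁ R₂ : Set V, R = R₁ ∪ R₂ → (∀ a ∈ R₁, ∀ b ∈ R₂, ⟪a, b⟫_ℝ = 0) →
    R₁ = ∅ ∨ R₂ = ∅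

/-- `β` is a short root (of minimal length). -/
def IsShort (R : Set V) (β : V) : Prop := β ∈ R ∧ ∀ γ ∈ R, ‖β‖ ≤ ‖γ‖

/-- `β` is a long root (of maximal length). -/
def IsLong (R : Set V) (β : V) : Prop := β ∈ R ∧ ∀ γ ∈ R, ‖γ‖ ≤ ‖β‖

/-- `α₀` is the highest root w.r.t. the base `S`. -/
def IsHighestRoot (R S : Set V) (α₀ : V) : Prop :=
  α₀ ∈ R ∧ ∀ β ∈ R, NonnegComb S (α₀ - β)

/-- `β₀` is the highest short root w.r.t. the base `S`. -/
def IsHighestShortRoot (R S : Set V) (β₀ : V) : Prop :=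
  IsShort R β₀ ∧ ∀ β, IsShort R β → NonnegComb S (β₀ - β)

/-- The Weyl group of `R`, as the subgroup of linear automorphisms generated by the
reflections in the roots. -/
def WeylGroup (R : Set V) : Subgroup (V ≃ₗ[ℝ] V) :=
  Subgroup.closure {g | ∃ α ∈ R, ∀ v, g v = preRefl α v}

/-- The length of `w`: the number of positive roots sent to negative roots. -/
noncomputable def invLength (R S : Set V) (w : V ≃ₗ[ℝ] V) : ℕ :=
  {β | β ∈ R ∧ NonnegComb S β ∧ NonnegComb S (-(w β))}.ncard

/-- One step in the Bruhat order: multiply by a reflection and increase length. -/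
def BruhatStep (R S : Set V) (u v : V ≃ₗ[ℝ] V) : Prop :=
  ∃ t : V ≃ₗ[ℝ] V, (∃ β ∈ R, ∀ x, t x = preRefl β x) ∧ v = u * t ∧
    invLength R S u < invLength R S v

/-- The Bruhat order on the Weyl group. -/
def BruhatLE (R S : Set V) : (V ≃ₗ[ℝ] V) → (V ≃ₗ[ℝ] V) → Prop :=
  Relation.ReflTransGen (BruhatStep R S)
section AuxiliaryLemmas

variable {V : Type*} [NormedAddCommGroup V] [InnerProductSpace ℝ V]

private lemma aux_inner_self_pos {x : V} (h : x ≠ 0) : 0 < ⟪x, x⟫_ℝ :=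
  lt_of_le_of_ne real_inner_self_nonneg (Ne.symm (inner_self_ne_zero.2 h))

private lemma aux_root_inner_pos {R : Set V} (hR : IsRootSystem R) {a : V} (ha : a ∈ R) :
    0 < ⟪a, a⟫_ℝ := aux_inner_self_pos (hR.ne_zero a ha)

private lemma cartanInt_add_left (x y a : V) :
    cartanInt (x + y) a = cartanInt x a + cartanInt y a := by
  unfold cartanInt; rw [inner_add_left]; ring

private lemma cartanInt_sub_left (x y a : V) :
    cartanInt (x - y) a = cartanInt x a - cartanInt y a := by
  unfold cartanInt; rw [inner_sub_left]; ring

private lemma cartanInt_smul_left (r : ℝ) (x a : V) :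
    cartanInt (r • x) a = r * cartanInt x a := by
  unfold cartanInt; rw [real_inner_smul_left]; ring

private lemma cartanInt_self {a : V} (h : ⟪a, a⟫_ℝ ≠ 0) : cartanInt a a = 2 := by
  unfold cartanInt; field_simp

private lemma preRefl_add (a x y : V) : preRefl a (x + y) = preRefl a x + preRefl a y := by
  unfold preRefl; rw [cartanInt_add_left, add_smul]; abel

private lemma preRefl_preRefl {a : V} (h : ⟪a, a⟫_ℝ ≠ 0) (v : V) :
    preRefl a (preRefl a v) = v := by
  unfold preRefl
  rw [cartanInt_sub_left, cartanInt_smul_left, cartanInt_self h]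
  have : cartanInt v a - cartanInt v a * 2 = -cartanInt v a := by ring
  rw [this, neg_smul, sub_neg_eq_add, sub_add_cancel]

private lemma aux_neg_mem {R : Set V} (hR : IsRootSystem R) {a : V} (ha : a ∈ R) : -a ∈ R := by
  have h := hR.reflect_mem a ha a ha
  rwa [preRefl, cartanInt_self (aux_root_inner_pos hR ha).ne', two_smul,
    show a - (a + a) = -a by abel] at h

private lemma aux_inner_preRefl_self (a v : V) :
    ⟪preRefl a v, preRefl a v⟫_ℝ = ⟪v, v⟫_ℝ := by
  by_cases h : ⟪a, a⟫_ℝ = 0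
  · have ha : a = 0 := inner_self_eq_zero.1 h
    simp [preRefl, cartanInt, ha]
  · unfold preRefl
    rw [real_inner_sub_sub_self]
    simp only [real_inner_smul_left, real_inner_smul_right]
    unfold cartanInt
    field_simp
    ring

private lemma aux_norm_preRefl (a v : V) : ‖preRefl a v‖ = ‖v‖ := by
  rw [norm_eq_sqrt_real_inner, norm_eq_sqrt_real_inner, aux_inner_preRefl_self]

/-- If two roots have positive inner product and are distinct, their difference is a root. -/
private lemma aux_sub_mem {R : Set V} (hR : IsRootSystem R) {γ δ : V} (hγ : γ ∈ R) (hδ : δ ∈ R)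
    (hpos : 0 < ⟪γ, δ⟫_ℝ) (hne : γ ≠ δ) : γ - δ ∈ R := by
  obtain ⟨m, hm⟩ := hR.crystallographic δ hδ γ hγ
  obtain ⟨n, hn⟩ := hR.crystallographic γ hγ δ hδ
  have hγγ := aux_root_inner_pos hR hγ
  have hδδ := aux_root_inner_pos hR hδ
  have hcomm : ⟪δ, γ⟫_ℝ = ⟪γ, δ⟫_ℝ := real_inner_comm γ δ
  have hm' : 2 * ⟪γ, δ⟫_ℝ = (m : ℝ) * ⟪δ, δ⟫_ℝ := by
    have := hm; unfold cartanInt at this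
    field_simp at this; linarith [this]
  have hn' : 2 * ⟪γ, δ⟫_ℝ = (n : ℝ) * ⟪γ, γ⟫_ℝ := by
    have := hn; unfold cartanInt at this
    rw [hcomm] at this
    field_simp at this; linarith [this]
  have hm1 : 1 ≤ m := by
    have : (0 : ℝ) < m := by nlinarith
    exact_mod_cast this
  have hn1 : 1 ≤ n := by
    have : (0 : ℝ) < n := by nlinarith
    exact_mod_cast this
  have hmn : m * n ≤ 4 := by
    have hcs := real_inner_mul_inner_self_le γ δ
    have e1 : (m : ℝ) * n * (⟪δ, δ⟫_ℝ * ⟪γ, γ⟫_ℝ) = 4 * (⟪γ, δ⟫_ℝ * ⟪γ, δ⟫_ℝ) := by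
      linear_combination (-(n : ℝ) * ⟪γ, γ⟫_ℝ) * hm' + (-(2 * ⟪γ, δ⟫_ℝ)) * hn'
    have hpos2 : 0 < ⟪δ, δ⟫_ℝ * ⟪γ, γ⟫_ℝ := mul_pos hδδ hγγ
    have : ((m * n : ℤ) : ℝ) ≤ 4 := by
      push_cast
      nlinarith
    exact_mod_cast this
  by_cases hn2 : n = 1
  · -- preRefl γ δ = δ - γ ∈ R
    have h1 : preRefl γ δ ∈ R := hR.reflect_mem γ hγ δ hδ
    rw [preRefl, hn, hn2] at h1
    simp only [Int.cast_one, one_smul] at h1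
    have := aux_neg_mem hR h1
    rwa [neg_sub] at this
  · by_cases hm2 : m = 1
    · have h1 : preRefl δ γ ∈ R := hR.reflect_mem δ hδ γ hγ
      rwa [preRefl, hm, hm2, Int.cast_one, one_smul] at h1
    · exfalso
      have hm2' : 2 ≤ m := by omega
      have hn2' : 2 ≤ n := by omega
      have hmle : m ≤ 2 := by nlinarith
      have hnle : n ≤ 2 := by nlinarith
      have hmeq : m = 2 ∧ n = 2 := ⟨le_antisymm hmle hm2', le_antisymm hnle hn2'⟩
      have h22 : ⟪γ, δ⟫_ℝ = ⟪δ, δ⟫_ℝ := by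
        have := hm'; rw [hmeq.1] at this; push_cast at this; linarith
      have h22' : ⟪γ, δ⟫_ℝ = ⟪γ, γ⟫_ℝ := by
        have := hn'; rw [hmeq.2] at this; push_cast at this; linarith
      have : ⟪γ - δ, γ - δ⟫_ℝ = 0 := by
        rw [real_inner_sub_sub_self]; linarith
      exact hne (sub_eq_zero.1 (inner_self_eq_zero.1 this))

/-- Coordinate functionals dual to a linearly independent set. -/
private lemma aux_exists_coords {S : Set V} (hind : LinearIndependent ℝ ((↑) : S → V)) :
    ∃ g : V → (V →ₗ[ℝ] ℝ), ∀ t ∈ S, ∀ s ∈ S,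
      (s = t → g t s = 1) ∧ (s ≠ t → g t s = 0) := by
  classical
  replace hind : LinearIndepOn ℝ id S := hind
  set T := hind.extend (Set.subset_univ S) with hT
  have hST : S ⊆ T := hind.subset_extend _
  set b : Module.Basis T ℝ V := Module.Basis.extend hind with hb
  refine ⟨fun t => if ht : t ∈ T then b.coord ⟨t, ht⟩ else 0, ?_⟩
  intro t htS s hsS
  have hbs : b ⟨s, hST hsS⟩ = s := Module.Basis.extend_apply_self hind ⟨s, hST hsS⟩
  dsimp only
  rw [dif_pos (hST htS)]
  have hrepr : b.repr s = Finsupp.single (⟨s, hST hsS⟩ : T) 1 := by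
    conv_lhs => rw [← hbs]
    exact b.repr_self _
  rw [Module.Basis.coord_apply, hrepr, Finsupp.single_apply]
  constructor
  · intro hst; rw [if_pos (Subtype.ext hst)]
  · intro hst; rw [if_neg fun h => hst (congrArg Subtype.val h)]

private lemma aux_map_comb (φ : V →ₗ[ℝ] ℝ) (c : V →₀ ℕ) :
    φ (c.sum fun v n => (n : ℝ) • v) = ∑ v ∈ c.support, (c v : ℝ) * φ v := by
  rw [map_finsuppSum]
  simp only [map_smul, smul_eq_mul, Finsupp.sum]

private lemma aux_inner_comb (γ : V) (c : V →₀ ℕ) :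
    ⟪γ, c.sum fun v n => (n : ℝ) • v⟫_ℝ = ∑ v ∈ c.support, (c v : ℝ) * ⟪γ, v⟫_ℝ := by
  rw [Finsupp.sum, inner_sum]
  exact Finset.sum_congr rfl fun v _ => real_inner_smul_right _ _ _

end AuxiliaryLemmas

set_option maxHeartbeats 1600000 in

/-- In a non-simply-laced irreducible root system with highest short root
`β₀`, there is a simple root `α` with `β₀ + α` a root, `⟨β₀ + α, α∨⟩ ≥ 2`; consequently
`β = s_α(β₀ + α)` is a positive root with `s_α · β = β₀` for the dot action
(`ρ` being the half sum of positive roots, characterized by `⟨ρ, α∨⟩ = 1` for simple `α`). -/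
theorem exists_simple_dot_eq_highestShort
    {R S : Set V} (hR : IsRootSystem R) (hS : IsBase R S)
    (hirr : IsIrreducibleRS R) (hnsl : ¬ IsSimplyLaced R)
    {β₀ : V} (hβ₀ : IsHighestShortRoot R S β₀)
    {ρ : V} (hρ : ∀ α ∈ S, cartanInt ρ α = 1) :
    ∃ α ∈ S, β₀ + α ∈ R ∧ 2 ≤ cartanInt (β₀ + α) α ∧
      (preRefl α (β₀ + α) ∈ R ∧ NonnegComb S (preRefl α (β₀ + α))) ∧
      preRefl α (preRefl α (β₀ + α) + ρ) - ρ = β₀ := by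
  classical
  obtain ⟨g, hg⟩ := aux_exists_coords hS.indep
  have hSfin : S.Finite := hR.finite.subset hS.subset
  set f : V →ₗ[ℝ] ℝ := ∑ t ∈ hSfin.toFinset, g t with hfdef
  have hf1 : ∀ s ∈ S, f s = 1 := by
    intro s hs
    rw [hfdef, LinearMap.sum_apply]
    rw [Finset.sum_eq_single_of_mem s (hSfin.mem_toFinset.2 hs)]
    · exact (hg s hs s hs).1 rfl
    · intro t ht hts
      exact (hg t (hSfin.mem_toFinset.1 ht) s hs).2 fun h => hts h.symm
  have fval : ∀ c : V →₀ ℕ, ↑c.support ⊆ S →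
      f (c.sum fun v n => (n : ℝ) • v) = ∑ v ∈ c.support, (c v : ℝ) := by
    intro c hsupp
    rw [aux_map_comb]
    exact Finset.sum_congr rfl fun v hv => by rw [hf1 v (hsupp hv), mul_one]
  have f_nonneg : ∀ x : V, NonnegComb S x → 0 ≤ f x := by
    rintro x ⟨c, hsupp, rfl⟩
    rw [fval c hsupp]
    exact Finset.sum_nonneg fun v _ => by positivity
  have f_one_le : ∀ x : V, NonnegComb S x → x ≠ 0 → 1 ≤ f x := by
    rintro x ⟨c, hsupp, rfl⟩ hx
    rw [fval c hsupp]
    have hc : c ≠ 0 := by rintro rfl; simp at hx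
    obtain ⟨v, hv⟩ := Finsupp.ne_iff.1 hc
    have hv' : c v ≠ 0 := by simpa using hv
    have hvmem : v ∈ c.support := Finsupp.mem_support_iff.2 hv'
    calc (1 : ℝ) ≤ (c v : ℝ) := by exact_mod_cast Nat.one_le_iff_ne_zero.2 hv'
      _ ≤ ∑ v ∈ c.support, (c v : ℝ) :=
        Finset.single_le_sum (f := fun v => (c v : ℝ)) (fun i _ => by positivity) hvmem
  have gval : ∀ t ∈ S, ∀ c : V →₀ ℕ, ↑c.support ⊆ S →
      g t (c.sum fun v n => (n : ℝ) • v) = c t := by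
    intro t ht c hsupp
    rw [aux_map_comb]
    by_cases htc : t ∈ c.support
    · rw [Finset.sum_eq_single_of_mem t htc]
      · rw [(hg t ht t ht).1 rfl, mul_one]
      · intro v hv hvt
        rw [(hg t ht v (hsupp hv)).2 hvt, mul_zero]
    · rw [Finset.sum_eq_zero, Finsupp.notMem_support_iff.1 htc, Nat.cast_zero]
      intro v hv
      have hvt : v ≠ t := fun h => htc (h ▸ hv)
      rw [(hg t ht v (hsupp hv)).2 hvt, mul_zero]
  have g_nonneg : ∀ t ∈ S, ∀ x : V, NonnegComb S x → 0 ≤ g t x := by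
    rintro t ht x ⟨c, hsupp, rfl⟩
    rw [gval t ht c hsupp]
    positivity
  have root_one_le : ∀ x ∈ R, NonnegComb S x → 1 ≤ f x := fun x hx h =>
    f_one_le x h (hR.ne_zero x hx)
  have root_pos_of_f : ∀ x ∈ R, 0 < f x → NonnegComb S x := by
    intro x hx hfx
    rcases hS.pos_or_neg x hx with h | h
    · exact h
    · exfalso
      have := f_one_le _ h (neg_ne_zero.2 (hR.ne_zero x hx))
      rw [map_neg] at this
      linarith
  have root_f_ne : ∀ x ∈ R, f x ≠ 0 := by
    intro x hx
    rcases hS.pos_or_neg x hx with h | h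
    · have := root_one_le x hx h; intro h0; linarith
    · have := f_one_le _ h (neg_ne_zero.2 (hR.ne_zero x hx))
      rw [map_neg] at this
      intro h0; linarith
  have hβ₀R : β₀ ∈ R := hβ₀.1.1
  have hshort : ∀ γ ∈ R, ‖β₀‖ ≤ ‖γ‖ := hβ₀.1.2
  have hβ₀pos : NonnegComb S β₀ := by
    rcases hS.pos_or_neg β₀ hβ₀R with h | h
    · exact h
    · exfalso
      have hns : IsShort R (-β₀) :=
        ⟨aux_neg_mem hR hβ₀R, fun γ hγ => by rw [norm_neg]; exact hshort γ hγ⟩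
      have h2 := hβ₀.2 _ hns
      rw [sub_neg_eq_add] at h2
      have h3 := f_nonneg _ h2
      have h4 := f_one_le _ h (neg_ne_zero.2 (hR.ne_zero β₀ hβ₀R))
      rw [map_neg] at h4
      rw [map_add] at h3
      linarith
  have hfβ₀ : 1 ≤ f β₀ := root_one_le β₀ hβ₀R hβ₀pos
  have dom : ∀ s ∈ S, 0 ≤ ⟪β₀, s⟫_ℝ := by
    intro s hs
    have hsR := hS.subset hs
    have hss := aux_root_inner_pos hR hsR
    have hrefl : preRefl s β₀ ∈ R := hR.reflect_mem s hsR β₀ hβ₀R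
    have hsh : IsShort R (preRefl s β₀) :=
      ⟨hrefl, fun γ hγ => by rw [aux_norm_preRefl]; exact hshort γ hγ⟩
    have h2 := hβ₀.2 _ hsh
    rw [preRefl, sub_sub_cancel] at h2
    have h3 := f_nonneg _ h2
    rw [map_smul, smul_eq_mul, hf1 s hs, mul_one] at h3
    unfold cartanInt at h3
    by_contra hneg
    push_neg at hneg
    have : 2 * ⟪β₀, s⟫_ℝ / ⟪s, s⟫_ℝ < 0 := div_neg_of_neg_of_pos (by linarith) hss
    linarith
  -- connectivity
  have conn : ∀ x ∈ R,
      Relation.ReflTransGen (fun u w : V => w ∈ R ∧ ⟪u, w⟫_ℝ ≠ 0) β₀ x := by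
    intro x hx
    set r : V → V → Prop := fun u w => w ∈ R ∧ ⟪u, w⟫_ℝ ≠ 0 with hr
    set R₁ : Set V := {y | y ∈ R ∧ Relation.ReflTransGen r β₀ y} with hR₁
    have hsub : R₁ ⊆ R := fun y hy => hy.1
    have hcover : R = R₁ ∪ (R \ R₁) := (Set.union_diff_cancel hsub).symm
    have horth : ∀ a ∈ R₁, ∀ b ∈ R \ R₁, ⟪a, b⟫_ℝ = 0 := by
      intro a ha b hb
      by_contra hab
      exact hb.2 ⟨hb.1, ha.2.tail ⟨hb.1, hab⟩⟩
    rcases hirr R₁ (R \ R₁) hcover horth with h | h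
    · exact absurd (show β₀ ∈ R₁ from ⟨hβ₀R, Relation.ReflTransGen.refl⟩)
        (by rw [h]; exact Set.notMem_empty β₀)
    · by_contra hx1
      exact Set.notMem_empty x (h ▸ (⟨hx, fun hmem => hx1 hmem.2⟩ : x ∈ R \ R₁))
  -- a long root pairing positively with β₀
  have hzeta : ∃ ζ ∈ R, ‖β₀‖ < ‖ζ‖ := by
    by_contra hcon
    push_neg at hcon
    apply hnsl
    intro a ha b hb
    rw [le_antisymm (hcon a ha) (hshort a ha), le_antisymm (hcon b hb) (hshort b hb)]
  obtain ⟨ζ, hζR, hζl⟩ := hzeta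
  have htrans : ∀ x : V,
      Relation.ReflTransGen (fun u w : V => w ∈ R ∧ ⟪u, w⟫_ℝ ≠ 0) β₀ x →
      (∃ η ∈ R, ‖β₀‖ < ‖η‖ ∧ ⟪η, x⟫_ℝ ≠ 0) →
      ∃ η ∈ R, ‖β₀‖ < ‖η‖ ∧ ⟪η, β₀⟫_ℝ ≠ 0 := by
    intro x hx
    induction hx with
    | refl => exact id
    | @tail b c hb hstep ih =>
      rintro ⟨η, hηR, hηl, hηc⟩
      rcases eq_or_ne ⟪η, b⟫_ℝ 0 with h0 | h0
      · apply ih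
        have hcR : c ∈ R := hstep.1
        have hcc := aux_root_inner_pos hR hcR
        refine ⟨preRefl c η, hR.reflect_mem c hcR η hηR,
          by rw [aux_norm_preRefl]; exact hηl, ?_⟩
        rw [preRefl, inner_sub_left, real_inner_smul_left, h0, zero_sub, neg_ne_zero]
        apply mul_ne_zero
        · unfold cartanInt
          exact div_ne_zero (mul_ne_zero two_ne_zero hηc) hcc.ne'
        · rw [real_inner_comm]; exact hstep.2
      · exact ih ⟨η, hηR, hηl, h0⟩
  have hlong : ∃ η ∈ R, ‖β₀‖ < ‖η‖ ∧ 0 < ⟪η, β₀⟫_ℝ := by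
    obtain ⟨η, hηR, hηl, hηβ⟩ := htrans ζ (conn ζ hζR)
      ⟨ζ, hζR, hζl, (aux_root_inner_pos hR hζR).ne'⟩
    rcases hηβ.lt_or_gt with hneg | hpos
    · refine ⟨-η, aux_neg_mem hR hηR, by rw [norm_neg]; exact hηl, ?_⟩
      rw [inner_neg_left]; linarith
    · exact ⟨η, hηR, hηl, hpos⟩
  obtain ⟨δ, hδR, hδl, hδβ⟩ := hlong
  have hβI := aux_root_inner_pos hR hβ₀R
  have hδI := aux_root_inner_pos hR hδR
  obtain ⟨m, hm⟩ := hR.crystallographic β₀ hβ₀R δ hδR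
  obtain ⟨n, hn⟩ := hR.crystallographic δ hδR β₀ hβ₀R
  have hcomm : ⟪β₀, δ⟫_ℝ = ⟪δ, β₀⟫_ℝ := real_inner_comm δ β₀
  have hm' : 2 * ⟪δ, β₀⟫_ℝ = (m : ℝ) * ⟪β₀, β₀⟫_ℝ := by
    have h := hm; unfold cartanInt at h
    field_simp at h; linarith
  have hn' : 2 * ⟪δ, β₀⟫_ℝ = (n : ℝ) * ⟪δ, δ⟫_ℝ := by
    have h := hn; unfold cartanInt at h
    rw [hcomm] at h
    field_simp at h; linarith
  have hlt : ⟪β₀, β₀⟫_ℝ < ⟪δ, δ⟫_ℝ := by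
    rw [real_inner_self_eq_norm_mul_norm, real_inner_self_eq_norm_mul_norm]
    exact mul_self_lt_mul_self (norm_nonneg β₀) hδl
  have hn1 : (1 : ℝ) ≤ n := by
    have h0 : (0 : ℝ) < n := by nlinarith
    have : (0 : ℤ) < n := by exact_mod_cast h0
    exact_mod_cast this
  have hm2 : (2 : ℝ) ≤ m := by
    have hnm : (n : ℝ) < m := by nlinarith
    have h1 : n < m := by exact_mod_cast hnm
    have h2 : (1 : ℤ) ≤ n := by exact_mod_cast hn1
    have : (2 : ℤ) ≤ m := by omega
    exact_mod_cast this
  have h2β : ⟪β₀, β₀⟫_ℝ ≤ ⟪δ, β₀⟫_ℝ := by nlinarith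
  have hδne : δ ≠ β₀ := fun h => by rw [h] at hlt; exact lt_irrefl _ hlt
  have hdmem : δ - β₀ ∈ R := aux_sub_mem hR hδR hβ₀R hδβ hδne
  have hgamma : ∃ γ, γ ∈ R ∧ 0 < f γ ∧ β₀ + γ ∈ R := by
    rcases lt_trichotomy (f (δ - β₀)) 0 with hfd | hfd | hfd
    · rcases lt_trichotomy (f δ) 0 with hfδ | hfδ | hfδ
      · refine ⟨-δ, aux_neg_mem hR hδR, ?_, ?_⟩
        · rw [map_neg]; linarith
        · rw [show β₀ + -δ = -(δ - β₀) by abel]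
          exact aux_neg_mem hR hdmem
      · exact absurd hfδ (root_f_ne δ hδR)
      · have hνR : β₀ - δ ∈ R := by
          have h := aux_neg_mem hR hdmem; rwa [neg_sub] at h
        have hfν : 0 < f (β₀ - δ) := by
          rw [map_sub] at hfd ⊢; linarith
        rcases lt_or_ge ⟪β₀, β₀ - δ⟫_ℝ 0 with hb | hb
        · have hν' : -(β₀ - δ) ∈ R := aux_neg_mem hR hνR
          have hip : 0 < ⟪-(β₀ - δ), β₀⟫_ℝ := by
            rw [inner_neg_left]
            have hcm : ⟪β₀ - δ, β₀⟫_ℝ = ⟪β₀, β₀ - δ⟫_ℝ := real_inner_comm β₀ (β₀ - δ)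
            linarith
          have hne2 : -(β₀ - δ) ≠ β₀ := by
            intro h
            have h2 := congrArg f h
            rw [map_neg] at h2
            linarith
          have hmem := aux_sub_mem hR hν' hβ₀R hip hne2
          refine ⟨β₀ - δ, hνR, hfν, ?_⟩
          rw [show β₀ + (β₀ - δ) = -(-(β₀ - δ) - β₀) by abel]
          exact aux_neg_mem hR hmem
        · have hbd : ⟪β₀, δ⟫_ℝ = ⟪β₀, β₀⟫_ℝ := by
            rw [inner_sub_right] at hb
            linarith
          have hcart : cartanInt δ (β₀ - δ) = -2 := by
            unfold cartanInt
            rw [inner_sub_right, real_inner_sub_sub_self]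
            have h1 : ⟪δ, β₀⟫_ℝ = ⟪β₀, β₀⟫_ℝ := by rw [← hcomm]; exact hbd
            rw [h1, hbd,
              show ⟪β₀, β₀⟫_ℝ - 2 * ⟪β₀, β₀⟫_ℝ + ⟪δ, δ⟫_ℝ = ⟪δ, δ⟫_ℝ - ⟪β₀, β₀⟫_ℝ by ring,
              div_eq_iff (by linarith)]
            ring
          have hmem : preRefl (β₀ - δ) δ ∈ R := hR.reflect_mem _ hνR δ hδR
          rw [preRefl, hcart] at hmem
          refine ⟨β₀ - δ, hνR, hfν, ?_⟩
          rw [show β₀ + (β₀ - δ) = δ - (-2 : ℝ) • (β₀ - δ) by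
            rw [neg_smul, sub_neg_eq_add, two_smul]; abel]
          exact hmem
    · exact absurd hfd (root_f_ne _ hdmem)
    · exact ⟨δ - β₀, hdmem, hfd, by rw [show β₀ + (δ - β₀) = δ by abel]; exact hδR⟩
  -- descent to a simple root
  have desc : ∀ N : ℕ, ∀ γ : V, γ ∈ R → 0 < f γ → f γ ≤ N → β₀ + γ ∈ R →
      ∃ α ∈ S, β₀ + α ∈ R := by
    intro N
    induction N with
    | zero =>
      intro γ _ h1 h2 _
      exfalso; push_cast at h2; linarith
    | succ N ih =>
      intro γ hγR hfγ hfle hsum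
      have hγpos : NonnegComb S γ := root_pos_of_f γ hγR hfγ
      have hfγ1 : 1 ≤ f γ := root_one_le γ hγR hγpos
      obtain ⟨c, hsupp, hc⟩ := hγpos
      have hγγ := aux_root_inner_pos hR hγR
      have hinner : 0 < ∑ v ∈ c.support, (c v : ℝ) * ⟪γ, v⟫_ℝ := by
        have h := aux_inner_comb γ c
        rw [← hc] at h
        linarith [h ▸ hγγ]
      obtain ⟨v, hv, hterm⟩ : ∃ v ∈ c.support, 0 < (c v : ℝ) * ⟪γ, v⟫_ℝ := by
        by_contra hcon
        push_neg at hcon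
        have := Finset.sum_nonpos hcon
        linarith
      have hvS : v ∈ S := hsupp hv
      have hγv : 0 < ⟪γ, v⟫_ℝ := by
        rcases le_or_gt ⟪γ, v⟫_ℝ 0 with h | h
        · exfalso
          have h0 : (0 : ℝ) ≤ (c v : ℝ) := by positivity
          nlinarith
        · exact h
      by_cases hγeq : γ = v
      · exact ⟨v, hvS, hγeq ▸ hsum⟩
      · have hvR := hS.subset hvS
        have h1 : γ - v ∈ R := aux_sub_mem hR hγR hvR hγv hγeq
        have h2 : 0 < ⟪β₀ + γ, v⟫_ℝ := by
          rw [inner_add_left]; linarith [dom v hvS]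
        have hne2 : β₀ + γ ≠ v := by
          intro h
          have h3 := congrArg f h
          rw [map_add, hf1 v hvS] at h3
          linarith
        have h3 : β₀ + γ - v ∈ R := aux_sub_mem hR hsum hvR h2 hne2
        have hfsub : f (γ - v) = f γ - 1 := by rw [map_sub, hf1 v hvS]
        have hfpos : 0 < f (γ - v) := by
          rcases lt_trichotomy (f (γ - v)) 0 with h | h | h
          · exfalso; linarith
          · exact absurd h (root_f_ne _ h1)
          · exact h
        refine ih (γ - v) h1 hfpos ?_
          (by rw [show β₀ + (γ - v) = β₀ + γ - v by abel]; exact h3)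
        rw [hfsub]; push_cast at hfle ⊢; linarith
  obtain ⟨γ, hγR, hfγ, hsum⟩ := hgamma
  obtain ⟨N, hN⟩ := exists_nat_ge (f γ)
  obtain ⟨α, hαS, hα⟩ := desc N γ hγR hfγ hN hsum
  -- conclusion
  have hαR := hS.subset hαS
  have hαI := aux_root_inner_pos hR hαR
  have hcart2 : cartanInt (β₀ + α) α = 2 * ⟪β₀, α⟫_ℝ / ⟪α, α⟫_ℝ + 2 := by
    rw [cartanInt_add_left, cartanInt_self hαI.ne']
    rfl
  have hge2 : 2 ≤ cartanInt (β₀ + α) α := by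
    rw [hcart2]
    have := div_nonneg (by linarith [dom α hαS] : (0:ℝ) ≤ 2 * ⟪β₀, α⟫_ℝ) hαI.le
    linarith
  have hreflR : preRefl α (β₀ + α) ∈ R := hR.reflect_mem α hαR _ hα
  have hsumpos : NonnegComb S (β₀ + α) := by
    apply root_pos_of_f _ hα
    rw [map_add, hf1 α hαS]
    linarith
  have hreflpos : NonnegComb S (preRefl α (β₀ + α)) := by
    obtain ⟨c, hsupp, hc⟩ := hsumpos
    by_cases hall : ∀ v ∈ c.support, v = α
    · exfalso
      have hsing : c = Finsupp.single α (c α) :=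
        Finsupp.support_subset_singleton.1 fun v hv => Finset.mem_singleton.2 (hall v hv)
      have heq : β₀ + α = ((c α : ℕ) : ℝ) • α := by
        rw [hc, hsing, Finsupp.sum_single_index]
        · simp
        · rw [Nat.cast_zero, zero_smul]
      have hred := hR.reduced α hαR ((c α : ℕ) : ℝ) (heq ▸ hα)
      rcases hred with h1 | h1
      · rw [h1, one_smul] at heq
        exact hR.ne_zero β₀ hβ₀R (add_eq_right.1 heq)
      · have h0 : (0 : ℝ) ≤ ((c α : ℕ) : ℝ) := by positivity
        rw [h1] at h0
        linarith
    · push_neg at hall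
      obtain ⟨t, htsupp, htne⟩ := hall
      have htS : t ∈ S := hsupp htsupp
      have hgt : 0 < g t (preRefl α (β₀ + α)) := by
        rw [preRefl, map_sub, map_smul, smul_eq_mul,
          (hg t htS α hαS).2 (Ne.symm htne), mul_zero, sub_zero, hc, gval t htS c hsupp]
        have hct : c t ≠ 0 := Finsupp.mem_support_iff.1 htsupp
        exact_mod_cast Nat.pos_of_ne_zero hct
      rcases hS.pos_or_neg _ hreflR with h | h
      · exact h
      · exfalso
        have := g_nonneg t htS _ h
        rw [map_neg] at this
        linarith
  refine ⟨α, hαS, hα, hge2, ⟨hreflR, hreflpos⟩, ?_⟩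
  rw [preRefl_add, preRefl_preRefl hαI.ne',
    show preRefl α ρ = ρ - α by rw [preRefl, hρ α hαS, one_smul]]
  abel
end

section
/- Let R be an irreducible crystallographic root system, α a simple root, and μ₁ a root with μ₁ ≠ -α and ⟨μ₁, α∨⟩ = -2. Then μ₁ + α is a short root, and μ₁ + α is not the negative of a simple root. -/
open scoped InnerProductSpace

variable {V : Type*} [NormedAddCommGroup V] [InnerProductSpace ℝ V]

lemma rs_inner_self_pos {x : V} (hx : x ≠ 0) : (0:ℝ) < ⟪x, x⟫_ℝ := by
  rcases lt_or_eq_of_le (real_inner_self_nonneg (x := x)) with h | h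
  · exact h
  · exact absurd (inner_self_eq_zero.mp h.symm) hx

lemma cartan_mul {x y : V} (hy : y ≠ 0) : cartanInt x y * ⟪y, y⟫_ℝ = 2 * ⟪x, y⟫_ℝ := by
  have := (rs_inner_self_pos hy).ne'
  rw [cartanInt]; field_simp

lemma cartan_self {x : V} (hx : x ≠ 0) : cartanInt x x = 2 := by
  have := (rs_inner_self_pos hx).ne'
  rw [cartanInt]; field_simp

lemma rs_neg_mem {R : Set V} (hR : IsRootSystem R) {x : V} (hx : x ∈ R) : -x ∈ R := by
  have h := hR.reflect_mem x hx x hx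
  rwa [preRefl, cartan_self (hR.ne_zero x hx), show x - (2:ℝ) • x = -x by module] at h

lemma inner_preRefl_self {δ : V} (hδ : δ ≠ 0) (x : V) :
    ⟪preRefl δ x, preRefl δ x⟫_ℝ = ⟪x, x⟫_ℝ := by
  have hD : ⟪δ, δ⟫_ℝ ≠ 0 := (rs_inner_self_pos hδ).ne'
  simp only [preRefl, cartanInt, inner_sub_left, inner_sub_right, real_inner_smul_left,
    real_inner_smul_right, real_inner_comm x δ]
  field_simp
  ring

lemma root_eq_or_neg {R : Set V} (hR : IsRootSystem R) {x y : V} (hx : x ∈ R) (hy : y ∈ R)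
    (h : ⟪x, y⟫_ℝ * ⟪x, y⟫_ℝ = ⟪x, x⟫_ℝ * ⟪y, y⟫_ℝ) : y = x ∨ y = -x := by
  have hx0 := hR.ne_zero x hx
  have hy0 := hR.ne_zero y hy
  have hxn : (0:ℝ) < ‖x‖ * ‖y‖ :=
    mul_pos (norm_pos_iff.mpr hx0) (norm_pos_iff.mpr hy0)
  have h' : ⟪x, y⟫_ℝ ^ 2 = (‖x‖ * ‖y‖) ^ 2 := by
    rw [real_inner_self_eq_norm_sq, real_inner_self_eq_norm_sq] at h
    linear_combination h
  have habs : |⟪x, y⟫_ℝ| = ‖x‖ * ‖y‖ := by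
    have := (sq_eq_sq_iff_abs_eq_abs _ _).mp h'
    rwa [abs_of_pos hxn] at this
  have h1 : |⟪x, y⟫_ℝ / (‖x‖ * ‖y‖)| = 1 := by
    rw [abs_div, habs, abs_of_pos hxn, div_self hxn.ne']
  obtain ⟨-, r, hr, hyr⟩ := (abs_real_inner_div_norm_mul_norm_eq_one_iff x y).mp h1
  rcases hR.reduced x hx r (by rwa [hyr] at hy) with h2 | h2 <;> rw [h2] at hyr
  · left; simpa using hyr
  · right; simpa using hyr

lemma rs_ratio {R : Set V} (hR : IsRootSystem R) {x y : V} (hx : x ∈ R) (hy : y ∈ R)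
    (hxy : ⟪x, y⟫_ℝ ≠ 0) :
    ⟪x, x⟫_ℝ = ⟪y, y⟫_ℝ ∨ ⟪x, x⟫_ℝ = 2 * ⟪y, y⟫_ℝ ∨ ⟪x, x⟫_ℝ = 3 * ⟪y, y⟫_ℝ ∨
      2 * ⟪x, x⟫_ℝ = ⟪y, y⟫_ℝ ∨ 3 * ⟪x, x⟫_ℝ = ⟪y, y⟫_ℝ := by
  have hx0 := hR.ne_zero x hx
  have hy0 := hR.ne_zero y hy
  have hP : (0:ℝ) < ⟪x, x⟫_ℝ := rs_inner_self_pos hx0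
  have hQ : (0:ℝ) < ⟪y, y⟫_ℝ := rs_inner_self_pos hy0
  have hCS : ⟪x, y⟫_ℝ * ⟪x, y⟫_ℝ ≤ ⟪x, x⟫_ℝ * ⟪y, y⟫_ℝ := real_inner_mul_inner_self_le x y
  rcases eq_or_lt_of_le hCS with heq | hlt
  · rcases root_eq_or_neg hR hx hy heq with rfl | rfl
    · exact Or.inl rfl
    · exact Or.inl (by rw [inner_neg_neg])
  obtain ⟨m, hm⟩ := hR.crystallographic x hx y hy
  obtain ⟨n, hn⟩ := hR.crystallographic y hy x hx
  have hmP : (m : ℝ) * ⟪x, x⟫_ℝ = 2 * ⟪x, y⟫_ℝ := by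
    have h := cartan_mul (x := y) (y := x) hx0
    rw [hm] at h
    have hc := real_inner_comm x y
    linarith
  have hnQ : (n : ℝ) * ⟪y, y⟫_ℝ = 2 * ⟪x, y⟫_ℝ := by
    have := cartan_mul (x := x) (y := y) hy0
    rwa [hn] at this
  have hm0 : m ≠ 0 := by
    rintro rfl; simp at hmP; exact hxy (by linarith)
  have hn0 : n ≠ 0 := by
    rintro rfl; simp at hnQ; exact hxy (by linarith)
  have hmn4 : (m : ℝ) * n * (⟪x, x⟫_ℝ * ⟪y, y⟫_ℝ) = 4 * (⟪x, y⟫_ℝ * ⟪x, y⟫_ℝ) := by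
    linear_combination ((n:ℝ) * ⟪y, y⟫_ℝ) * hmP + (2 * ⟪x, y⟫_ℝ) * hnQ
  have hcc : (0:ℝ) < ⟪x, y⟫_ℝ * ⟪x, y⟫_ℝ := mul_self_pos.mpr hxy
  have hPQ : (0:ℝ) < ⟪x, x⟫_ℝ * ⟪y, y⟫_ℝ := mul_pos hP hQ
  have hmnlt : (m : ℝ) * n < 4 := by nlinarith [hmn4, hlt, hPQ]
  have hmnpos : (0:ℝ) < (m : ℝ) * n := by nlinarith [hmn4, hcc, hPQ]
  have hmnlt' : m * n < 4 := by exact_mod_cast hmnlt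
  have hmnpos' : 0 < m * n := by exact_mod_cast hmnpos
  have hnat : m.natAbs * n.natAbs ≤ 3 := by rw [← Int.natAbs_mul]; omega
  have hmb : m.natAbs ≤ 3 :=
    le_trans (Nat.le_mul_of_pos_right _ (by omega : 0 < n.natAbs)) hnat
  have hnb : n.natAbs ≤ 3 :=
    le_trans (Nat.le_mul_of_pos_right _ (by omega : 0 < m.natAbs)) (by rwa [Nat.mul_comm] at hnat)
  have hMN : (m : ℝ) * ⟪x, x⟫_ℝ = (n : ℝ) * ⟪y, y⟫_ℝ := by linarith
  have hmr : (m : ℝ) ≠ 0 := Int.cast_ne_zero.mpr hm0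
  have hnr : (n : ℝ) ≠ 0 := Int.cast_ne_zero.mpr hn0
  have key : n = m ∨ n = 2 * m ∨ n = 3 * m ∨ m = 2 * n ∨ m = 3 * n := by
    have hml : -3 ≤ m := by omega
    have hmu : m ≤ 3 := by omega
    have hnl : -3 ≤ n := by omega
    have hnu : n ≤ 3 := by omega
    interval_cases m <;> interval_cases n <;> omega
  rcases key with h | h | h | h | h
  · refine Or.inl (mul_left_cancel₀ hmr ?_)
    rw [h] at hMN; exact hMN
  · refine Or.inr (Or.inl (mul_left_cancel₀ hmr ?_))
    rw [h] at hMN; push_cast at hMN; linear_combination hMN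
  · refine Or.inr (Or.inr (Or.inl (mul_left_cancel₀ hmr ?_)))
    rw [h] at hMN; push_cast at hMN; linear_combination hMN
  · refine Or.inr (Or.inr (Or.inr (Or.inl (mul_left_cancel₀ hnr ?_))))
    rw [h] at hMN; push_cast at hMN; linear_combination hMN
  · refine Or.inr (Or.inr (Or.inr (Or.inr (mul_left_cancel₀ hnr ?_))))
    rw [h] at hMN; push_cast at hMN; linear_combination hMN

lemma exists_orbit_inner_ne {R : Set V} (hR : IsRootSystem R) (hirr : IsIrreducibleRS R)
    {β γ : V} (hβ : β ∈ R) (hγ : γ ∈ R) :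
    ∃ v ∈ R, ⟪v, v⟫_ℝ = ⟪β, β⟫_ℝ ∧ ⟪γ, v⟫_ℝ ≠ 0 := by
  classical
  set O : Set V := {v | Relation.ReflTransGen (fun x y => ∃ δ ∈ R, y = preRefl δ x) β v} with hOdef
  have hOβ : β ∈ O := Relation.ReflTransGen.refl
  have hO : ∀ v ∈ O, v ∈ R ∧ ⟪v, v⟫_ℝ = ⟪β, β⟫_ℝ := by
    intro v hv
    induction hv with
    | refl => exact ⟨hβ, rfl⟩
    | tail _ h2 ih =>
      obtain ⟨δ, hδ, rfl⟩ := h2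
      exact ⟨hR.reflect_mem δ hδ _ ih.1,
        by rw [inner_preRefl_self (hR.ne_zero δ hδ)]; exact ih.2⟩
  have hOclosed : ∀ b ∈ R, ∀ u ∈ O, preRefl b u ∈ O := by
    intro b hb u hu
    exact hu.tail ⟨b, hb, rfl⟩
  -- any root not in the span of O is orthogonal to the span of O
  have hperp : ∀ b ∈ R, b ∉ Submodule.span ℝ O → ∀ x ∈ Submodule.span ℝ O, ⟪b, x⟫_ℝ = 0 := by
    intro b hb hbU
    have hO' : O ⊆ (LinearMap.ker ((innerSL ℝ b).toLinearMap) : Set V) := by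
      intro u hu
      simp only [SetLike.mem_coe, LinearMap.mem_ker, ContinuousLinearMap.coe_coe, innerSL_apply_apply]
      by_contra hne
      have hbb : ⟪b, b⟫_ℝ ≠ 0 := (rs_inner_self_pos (hR.ne_zero b hb)).ne'
      have hc : cartanInt u b ≠ 0 := by
        rw [cartanInt]
        rw [real_inner_comm b u]
        exact div_ne_zero (by simpa using hne) hbb
      have h1 : preRefl b u ∈ O := hOclosed b hb u hu
      have h2 : cartanInt u b • b = u - preRefl b u := by rw [preRefl]; module
      have h3 : cartanInt u b • b ∈ Submodule.span ℝ O := by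
        rw [h2]
        exact sub_mem (Submodule.subset_span hu) (Submodule.subset_span h1)
      exact hbU ((Submodule.smul_mem_iff _ hc).mp h3)
    intro x hx
    have := Submodule.span_le.mpr hO' hx
    simpa using this
  have hRU : R ⊆ (Submodule.span ℝ O : Set V) := by
    have horth : ∀ a ∈ R ∩ (Submodule.span ℝ O : Set V), ∀ b ∈ R \ (Submodule.span ℝ O : Set V),
        ⟪a, b⟫_ℝ = 0 := by
      intro a ha b hb
      rw [real_inner_comm]
      exact hperp b hb.1 hb.2 a ha.2
    rcases hirr (R ∩ (Submodule.span ℝ O : Set V)) (R \ (Submodule.span ℝ O : Set V))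
        (by ext z; by_cases hz : z ∈ (Submodule.span ℝ O : Set V) <;> simp [hz]) horth with h | h
    · exfalso
      have : β ∈ R ∩ (Submodule.span ℝ O : Set V) := ⟨hβ, Submodule.subset_span hOβ⟩
      rw [h] at this
      exact this
    · intro z hz
      by_contra hzU
      have : z ∈ R \ (Submodule.span ℝ O : Set V) := ⟨hz, hzU⟩
      rw [h] at this
      exact this
  by_contra hcon
  push_neg at hcon
  have hγO : ∀ u ∈ O, ⟪γ, u⟫_ℝ = 0 := fun u hu => hcon u (hO u hu).1 (hO u hu).2
  have hker : O ⊆ (LinearMap.ker ((innerSL ℝ γ).toLinearMap) : Set V) := by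
    intro u hu
    simpa using hγO u hu
  have hγγ : ⟪γ, γ⟫_ℝ = 0 := by
    have := Submodule.span_le.mpr hker (hRU hγ)
    simpa using this
  exact (rs_inner_self_pos (hR.ne_zero γ hγ)).ne' hγγ

lemma sub_simple_not_nonneg {S : Set V} (hind : LinearIndependent ℝ ((↑) : S → V))
    {σ α : V} (hσ : σ ∈ S) (hα : α ∈ S) (hne : σ ≠ α) : ¬ NonnegComb S (σ - α) := by
  classical
  rintro ⟨c, hsupp, hsum⟩
  set l : V →₀ ℝ :=
    c.mapRange (Nat.cast) Nat.cast_zero - Finsupp.single σ 1 + Finsupp.single α 1 with hl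
  have htot : Finsupp.linearCombination ℝ (id : V → V) l = 0 := by
    rw [hl]
    rw [map_add, map_sub]
    have h1 : Finsupp.linearCombination ℝ (id : V → V) (c.mapRange Nat.cast Nat.cast_zero)
        = σ - α := by
      rw [Finsupp.linearCombination_apply, Finsupp.sum_mapRange_index (by simp)]
      simpa using hsum.symm
    rw [h1, Finsupp.linearCombination_single, Finsupp.linearCombination_single]
    simp only [id, one_smul]
    abel
  have hsuppl : (l.support : Set V) ⊆ S := by
    intro x hx
    rw [hl] at hx
    rcases Finset.mem_union.mp (Finsupp.support_add hx) with h | h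
    · rcases Finset.mem_union.mp (Finsupp.support_sub h) with h' | h'
      · exact hsupp (Finset.coe_subset.mpr Finsupp.support_mapRange h')
      · have := Finsupp.support_single_subset h'
        simp at this
        exact this ▸ hσ
    · have := Finsupp.support_single_subset h
      simp at this
      exact this ▸ hα
  have hl0 : l = 0 :=
    linearIndepOn_iff.mp (linearIndependent_subtype_iff.mp hind) l ((Finsupp.mem_supported ℝ l).mpr hsuppl) htot
  have heval : l α = 0 := by rw [hl0]; rfl
  rw [hl] at heval
  rw [Finsupp.add_apply, Finsupp.sub_apply, Finsupp.mapRange_apply] at heval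
  rw [Finsupp.single_apply, Finsupp.single_apply] at heval
  simp [hne] at heval
  have : (0:ℝ) ≤ (c α : ℝ) := Nat.cast_nonneg _
  linarith

/-- If `α` is a simple root and `μ₁` a root with `μ₁ ≠ -α` and
`⟨μ₁, α∨⟩ = -2`, then `μ₁ + α` is a short root and is not the negative of a simple root. -/
theorem short_not_neg_simple_of_cartan_neg_two
    {R S : Set V} (hR : IsRootSystem R) (hS : IsBase R S) (hirr : IsIrreducibleRS R)
    {α μ₁ : V} (hα : α ∈ S) (hμ : μ₁ ∈ R) (hne : μ₁ ≠ -α)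
    (hcart : cartanInt μ₁ α = -2) :
    IsShort R (μ₁ + α) ∧ -(μ₁ + α) ∉ S := by
  
  have αR : α ∈ R := hS.subset hα
  have hα0 : α ≠ 0 := hR.ne_zero α αR
  have hμ0 : μ₁ ≠ 0 := hR.ne_zero μ₁ hμ
  have hA : (0:ℝ) < ⟪α, α⟫_ℝ := rs_inner_self_pos hα0
  have hM : (0:ℝ) < ⟪μ₁, μ₁⟫_ℝ := rs_inner_self_pos hμ0
  have hμα : ⟪μ₁, α⟫_ℝ = -⟪α, α⟫_ℝ := by
    have h := cartan_mul (x := μ₁) (y := α) hα0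
    rw [hcart] at h; linarith
  have hCS : ⟪μ₁, α⟫_ℝ * ⟪μ₁, α⟫_ℝ ≤ ⟪μ₁, μ₁⟫_ℝ * ⟪α, α⟫_ℝ := real_inner_mul_inner_self_le μ₁ α
  have hAM : ⟪α, α⟫_ℝ ≤ ⟪μ₁, μ₁⟫_ℝ := by nlinarith [hμα, hCS, hA]
  have hMneA : ⟪μ₁, μ₁⟫_ℝ ≠ ⟪α, α⟫_ℝ := by
    intro hEq
    have heq : ⟪μ₁, α⟫_ℝ * ⟪μ₁, α⟫_ℝ = ⟪μ₁, μ₁⟫_ℝ * ⟪α, α⟫_ℝ := by rw [hEq, hμα]; ring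
    rcases root_eq_or_neg hR hμ αR heq with h | h
    · rw [h] at hμα; linarith
    · exact hne (by rw [h, neg_neg])
  have hxyne : ⟪μ₁, α⟫_ℝ ≠ 0 := by rw [hμα]; exact neg_ne_zero.mpr hA.ne'
  have hM2A : ⟪μ₁, μ₁⟫_ℝ = 2 * ⟪α, α⟫_ℝ := by
    rcases rs_ratio hR hμ αR hxyne with h | h | h | h | h
    · exact absurd h hMneA
    · exact h
    · exfalso
      obtain ⟨n, hn⟩ := hR.crystallographic μ₁ hμ α αR
      have h2 := cartan_mul (x := α) (y := μ₁) hμ0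
      rw [hn] at h2
      have hc := real_inner_comm μ₁ α
      have h4 : ((3 * n : ℝ) + 2) * ⟪α, α⟫_ℝ = 0 := by
        linear_combination h2 - (n : ℝ) * h + 2 * hc + 2 * hμα
      rcases mul_eq_zero.mp h4 with h5 | h5
      · have h6 : (3 * n : ℝ) = -2 := by linarith
        have h7 : (3 * n : ℤ) = -2 := by exact_mod_cast h6
        omega
      · exact hA.ne' h5
    · linarith
    · linarith
  have hcαμ : cartanInt α μ₁ = -1 := by
    rw [cartanInt, real_inner_comm μ₁ α, hμα, hM2A]
    rw [div_eq_iff (by positivity)]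
    ring
  have hμR : μ₁ + α ∈ R := by
    have h := hR.reflect_mem μ₁ hμ α αR
    rw [preRefl, hcαμ] at h
    rwa [show α - (-1:ℝ) • μ₁ = μ₁ + α by module] at h
  have hμμ : ⟪μ₁ + α, μ₁ + α⟫_ℝ = ⟪α, α⟫_ℝ := by
    have hc := real_inner_comm μ₁ α
    simp only [inner_add_left, inner_add_right]
    linarith
  constructor
  · refine ⟨hμR, ?_⟩
    intro γ hγ
    have hG : (0:ℝ) < ⟪γ, γ⟫_ℝ := rs_inner_self_pos (hR.ne_zero γ hγ)
    have key : ⟪α, α⟫_ℝ ≤ ⟪γ, γ⟫_ℝ := by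
      by_contra hlt
      push_neg at hlt
      obtain ⟨v, hvR, hvv, hγv⟩ := exists_orbit_inner_ne hR hirr αR hγ
      obtain ⟨w, hwR, hww, hγw⟩ := exists_orbit_inner_ne hR hirr hμ hγ
      rw [hM2A] at hww
      have r1 := rs_ratio hR hγ hvR hγv
      rw [hvv] at r1
      have r2 := rs_ratio hR hγ hwR hγw
      rw [hww] at r2
      rcases r1 with h | h | h | h | h <;> rcases r2 with h' | h' | h' | h' | h' <;> linarith
    have h1 : ‖μ₁ + α‖ ^ 2 ≤ ‖γ‖ ^ 2 := by
      rw [← real_inner_self_eq_norm_sq, ← real_inner_self_eq_norm_sq, hμμ]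
      exact key
    exact (pow_le_pow_iff_left₀ (norm_nonneg _) (norm_nonneg _) two_ne_zero).mp h1
  · intro hcontra
    have hσR : -(μ₁ + α) ∈ R := hS.subset hcontra
    by_cases hcase : -(μ₁ + α) = α
    · have h : μ₁ + α = -α := by rw [← neg_neg (μ₁ + α), hcase]
      have hμ2 : μ₁ = (-2:ℝ) • α := by
        have h2 := eq_sub_of_add_eq h
        rw [h2]; module
      rcases hR.reduced α αR (-2) (by rw [← hμ2]; exact hμ) with h3 | h3 <;> norm_num at h3
    · have hnegμ : -μ₁ ∈ R := rs_neg_mem hR hμ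
      have hrefl := hR.reflect_mem α αR (-μ₁) hnegμ
      have hcval : cartanInt (-μ₁) α = 2 := by
        rw [cartanInt, inner_neg_left, hμα]
        rw [div_eq_iff hA.ne']
        ring
      have heq2 : preRefl α (-μ₁) = -(μ₁ + α) - α := by
        rw [preRefl, hcval]; module
      rw [heq2] at hrefl
      rcases hS.pos_or_neg _ hrefl with h | h
      · exact sub_simple_not_nonneg hS.indep hcontra hα hcase h
      · rw [neg_sub] at h
        exact sub_simple_not_nonneg hS.indep hα hcontra (Ne.symm hcase) h
end

section
/- Let W be the Weyl group of a crystallographic root system with positive roots R⁺, let w ∈ W, and suppose β ∈ R⁺ satisfies v⁻¹(β) ∈ R⁺ for every v ≤ w in Bruhat order. If α is a simple root with ℓ(s_α w) = ℓ(w) - 1, then β ≠ α, and moreover for every v' ≤ s_α w, both (v')⁻¹(β) and (v')⁻¹(s_α(β)) are positive roots. -/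
open scoped InnerProductSpace

variable {V : Type*} [NormedAddCommGroup V] [InnerProductSpace ℝ V]

-- basic lemmas
lemma preRefl_zero (v : V) : preRefl 0 v = v := by
  simp [preRefl, cartanInt]

lemma preRefl_of_inner_zero {γ : V} (h : ⟪γ, γ⟫_ℝ = 0) (v : V) : preRefl γ v = v := by
  have : γ = 0 := by rwa [inner_self_eq_zero] at h
  simp [this, preRefl_zero]

lemma cartanInt_smul_self {γ : V} (v : V) (h : ⟪γ, γ⟫_ℝ ≠ 0) :
    cartanInt v γ * ⟪γ, γ⟫_ℝ = 2 * ⟪v, γ⟫_ℝ := by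
  rw [cartanInt, div_mul_cancel₀ _ h]

lemma preRefl_invol (γ : V) : Function.Involutive (preRefl γ) := by
  intro v
  by_cases h : ⟪γ, γ⟫_ℝ = 0
  · rw [preRefl_of_inner_zero h, preRefl_of_inner_zero h]
  · unfold preRefl cartanInt
    rw [inner_sub_left, real_inner_smul_left]
    have : (2 * (⟪v, γ⟫_ℝ - 2 * ⟪v, γ⟫_ℝ / ⟪γ, γ⟫_ℝ * ⟪γ, γ⟫_ℝ) / ⟪γ, γ⟫_ℝ)
        = - (2 * ⟪v, γ⟫_ℝ / ⟪γ, γ⟫_ℝ) := by field_simp; ring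
    rw [this, neg_smul, sub_neg_eq_add, sub_add_cancel]

noncomputable def sref (γ : V) : V →ₗ[ℝ] V where
  toFun v := preRefl γ v
  map_add' a b := by
    simp only [preRefl, cartanInt, inner_add_left]
    rw [mul_add, add_div, add_smul]
    abel
  map_smul' r a := by
    simp only [preRefl, cartanInt, real_inner_smul_left, RingHom.id_apply, smul_sub,
      smul_smul]
    congr 1
    ring_nf

noncomputable def sr (γ : V) : V ≃ₗ[ℝ] V :=
  LinearEquiv.ofInvolutive (sref γ) (preRefl_invol γ)

@[simp] lemma sr_apply (γ x : V) : sr γ x = preRefl γ x := rfl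

lemma sr_sr (γ x : V) : sr γ (sr γ x) = x := preRefl_invol γ x

lemma lmul_apply (f g : V ≃ₗ[ℝ] V) (x : V) : (f * g) x = f (g x) := rfl
lemma lone_apply (x : V) : (1 : V ≃ₗ[ℝ] V) x = x := rfl
lemma linv_eq_symm (f : V ≃ₗ[ℝ] V) : f⁻¹ = f.symm := rfl

lemma sr_mul_self (γ : V) : sr γ * sr γ = 1 :=
  LinearEquiv.ext fun x => sr_sr γ x

lemma sr_inv (γ : V) : (sr γ)⁻¹ = sr γ := by
  rw [inv_eq_iff_mul_eq_one, sr_mul_self]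

lemma sr_symm (γ : V) : (sr γ).symm = sr γ := by rw [← linv_eq_symm, sr_inv]

lemma sr_neg (γ : V) : sr (-γ) = sr γ := by
  refine LinearEquiv.ext fun x => ?_
  simp only [sr_apply, preRefl, cartanInt, inner_neg_left, inner_neg_right, neg_neg,
    smul_neg, mul_neg, neg_div, neg_smul, neg_neg]

lemma sr_self (γ : V) : sr γ γ = -γ := by
  by_cases h : ⟪γ, γ⟫_ℝ = 0
  · have : γ = 0 := by rwa [inner_self_eq_zero] at h
    simp [this, preRefl_zero]
  · simp only [sr_apply, preRefl, cartanInt]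
    have h2 : 2 * ⟪γ, γ⟫_ℝ / ⟪γ, γ⟫_ℝ = 2 := by field_simp
    rw [h2, two_smul]
    abel

lemma preRefl_inner (γ x y : V) : ⟪preRefl γ x, preRefl γ y⟫_ℝ = ⟪x, y⟫_ℝ := by
  by_cases h : ⟪γ, γ⟫_ℝ = 0
  · rw [preRefl_of_inner_zero h, preRefl_of_inner_zero h]
  · simp only [preRefl, cartanInt]
    rw [inner_sub_left, inner_sub_right, inner_sub_right, real_inner_smul_left,
      real_inner_smul_left, real_inner_smul_right, real_inner_smul_right,
      real_inner_comm γ y]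
    field_simp
    ring

-- Part 2: Weyl group basics
lemma preRefl_mem_weyl {R : Set V} {γ : V} (hγ : γ ∈ R) : sr γ ∈ WeylGroup R :=
  Subgroup.subset_closure ⟨γ, hγ, fun _ => rfl⟩

lemma weyl_orth {R : Set V} {u : V ≃ₗ[ℝ] V} (hu : u ∈ WeylGroup R) :
    ∀ x y : V, ⟪u x, u y⟫_ℝ = ⟪x, y⟫_ℝ := by
  induction hu using Subgroup.closure_induction with
  | mem g hg =>
    obtain ⟨γ, -, hgγ⟩ := hg
    intro x y
    rw [hgγ, hgγ, preRefl_inner]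
  | one => intro x y; rfl
  | mul a b _ _ ha hb => intro x y; rw [lmul_apply, lmul_apply, ha, hb]
  | inv a _ ha =>
    intro x y
    rw [linv_eq_symm, ← ha (a.symm x) (a.symm y), LinearEquiv.apply_symm_apply,
      LinearEquiv.apply_symm_apply]

lemma weyl_stab {R : Set V} (hR : IsRootSystem R) {u : V ≃ₗ[ℝ] V} (hu : u ∈ WeylGroup R) :
    (∀ β ∈ R, u β ∈ R) ∧ (∀ β ∈ R, u⁻¹ β ∈ R) := by
  induction hu using Subgroup.closure_induction with
  | mem g hg =>
    obtain ⟨γ, hγ, hgγ⟩ := hg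
    have hg' : ∀ β ∈ R, g β ∈ R := fun β hβ => by
      rw [hgγ]; exact hR.reflect_mem γ hγ β hβ
    refine ⟨hg', fun β hβ => ?_⟩
    have hge : g = sr γ := LinearEquiv.ext fun x => hgγ x
    have : g⁻¹ = g := by rw [hge, sr_inv]
    rw [this]; exact hg' β hβ
  | one => exact ⟨fun β hβ => hβ, fun β hβ => hβ⟩
  | mul a b _ _ ha hb =>
    refine ⟨fun β hβ => ha.1 _ (hb.1 β hβ), fun β hβ => ?_⟩
    rw [mul_inv_rev, lmul_apply]
    exact hb.2 _ (ha.2 β hβ)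
  | inv a _ ha => exact ⟨fun β hβ => ha.2 β hβ, fun β hβ => by rw [inv_inv]; exact ha.1 β hβ⟩

lemma weyl_conj {R : Set V} {u : V ≃ₗ[ℝ] V} (hu : u ∈ WeylGroup R) (γ : V) :
    u * sr γ * u⁻¹ = sr (u γ) := by
  refine LinearEquiv.ext fun x => ?_
  rw [lmul_apply, lmul_apply, linv_eq_symm]
  simp only [sr_apply, preRefl, cartanInt]
  have horth := weyl_orth hu
  rw [map_sub, map_smul, ← horth (u.symm x) γ, ← horth γ γ, LinearEquiv.apply_symm_apply]

lemma weyl_conj' {R : Set V} {u : V ≃ₗ[ℝ] V} (hu : u ∈ WeylGroup R) (γ : V) :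
    sr (u γ) * u = u * sr γ := by
  rw [← weyl_conj hu γ, inv_mul_cancel_right]

-- Part 3: Finsupp combinatorics for NonnegComb
set_option linter.unusedSectionVars false
noncomputable def natR (c : V →₀ ℕ) : V →₀ ℝ := c.mapRange (Nat.cast : ℕ → ℝ) Nat.cast_zero

lemma natR_apply (c : V →₀ ℕ) (v : V) : natR c v = (c v : ℝ) := by
  rw [natR, Finsupp.mapRange_apply]

lemma natR_support (c : V →₀ ℕ) : (natR c).support ⊆ c.support := by
  rw [natR]; exact Finsupp.support_mapRange

lemma natR_sum (c : V →₀ ℕ) : ((natR c).sum fun v r => r • v) = c.sum fun v n => (n : ℝ) • v := by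
  rw [natR]; exact Finsupp.sum_mapRange_index (by simp)

lemma comb_zero {S : Set V} (hind : LinearIndependent ℝ ((↑) : S → V)) (l : V →₀ ℝ)
    (hl : ↑l.support ⊆ S) (h : (l.sum fun v r => r • v) = 0) : l = 0 := by
  refine (linearIndepOn_iff (v := id)).mp hind l ((Finsupp.mem_supported ℝ l).mpr hl) ?_
  rw [Finsupp.linearCombination_apply]
  simpa using h

lemma nonnegComb_zero {S : Set V} : NonnegComb S (0 : V) :=
  ⟨0, by simp, by simp⟩

lemma nonnegComb_mem {S : Set V} {γ : V} (hγ : γ ∈ S) : NonnegComb S γ := by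
  classical
  refine ⟨Finsupp.single γ 1, ?_, ?_⟩
  · intro v hv
    have hv' : v ∈ (Finsupp.single γ 1).support := hv
    have := Finsupp.support_single_subset hv'
    simp only [Finset.mem_singleton] at this
    exact this ▸ hγ
  · rw [Finsupp.sum_single_index (by simp)]; simp

lemma nonnegComb_add {S : Set V} {a b : V} (ha : NonnegComb S a) (hb : NonnegComb S b) :
    NonnegComb S (a + b) := by
  classical
  obtain ⟨c, hc, hc2⟩ := ha
  obtain ⟨d, hd, hd2⟩ := hb
  refine ⟨c + d, ?_, ?_⟩
  · intro v hv
    have hv' : v ∈ (c + d).support := hv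
    have := Finsupp.support_add hv'
    rw [Finset.mem_union] at this
    exact this.imp (fun h => hc h) (fun h => hd h) |>.elim id id
  · rw [Finsupp.sum_add_index' (by simp) (by intro a b c; rw [Nat.cast_add, add_smul])]
    rw [hc2, hd2]

lemma rep_combine {S : Set V} (hind : LinearIndependent ℝ ((↑) : S → V)) {γ : V} (hγ : γ ∈ S)
    (m : ℝ) (c e : V →₀ ℕ) (hc : ↑c.support ⊆ S) (he : ↑e.support ⊆ S) (ε : ℝ)
    (h : (c.sum fun v n => (n : ℝ) • v) + ε • (e.sum fun v n => (n : ℝ) • v) = m • γ) :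
    ∀ v, (c v : ℝ) + ε * e v = Finsupp.single γ m v := by
  classical
  set l := natR c + ε • natR e - Finsupp.single γ m with hl
  have hsupp : ↑l.support ⊆ S := by
    intro v hv
    have hv' : v ∈ l.support := hv
    have h1 := Finsupp.support_sub hv'
    rw [Finset.mem_union] at h1
    rcases h1 with h1 | h1
    · have h2 := Finsupp.support_add h1
      rw [Finset.mem_union] at h2
      rcases h2 with h2 | h2
      · exact hc (natR_support c h2)
      · have := Finsupp.support_smul h2
        exact he (natR_support e this)
    · have := Finsupp.support_single_subset h1
      simp only [Finset.mem_singleton] at this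
      exact this ▸ hγ
  have hsmulsum : ((ε • natR e).sum fun v r => r • v) = ε • ((natR e).sum fun v r => r • v) := by
    rw [Finsupp.sum_smul_index (by simp), Finsupp.smul_sum]
    simp [smul_smul]
  have hsum : (l.sum fun v r => r • v) = 0 := by
    rw [hl, Finsupp.sum_sub_index (by intro a b1 b2; rw [sub_smul]),
      Finsupp.sum_add_index' (by simp) (by intro a b c; rw [add_smul]),
      hsmulsum, natR_sum, natR_sum, Finsupp.sum_single_index (by simp), h, sub_self]
  have hz := comb_zero hind l hsupp hsum
  intro v
  have hv := DFunLike.congr_fun hz v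
  simp only [hl, Finsupp.sub_apply, Finsupp.add_apply, Finsupp.smul_apply, natR_apply,
    Finsupp.zero_apply, smul_eq_mul] at hv
  linarith

lemma not_pos_neg {S : Set V} (hind : LinearIndependent ℝ ((↑) : S → V)) {β : V}
    (hβ0 : β ≠ 0) (h1 : NonnegComb S β) (h2 : NonnegComb S (-β)) : False := by
  classical
  obtain ⟨c, hc, hc2⟩ := h1
  obtain ⟨d, hd, hd2⟩ := h2
  have hsupp : ↑(natR c + natR d).support ⊆ S := by
    intro v hv
    have hv' : v ∈ (natR c + natR d).support := hv
    have h2 := Finsupp.support_add hv'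
    rw [Finset.mem_union] at h2
    exact h2.elim (fun h => hc (natR_support c h)) (fun h => hd (natR_support d h))
  have hsum : ((natR c + natR d).sum fun v r => r • v) = 0 := by
    rw [Finsupp.sum_add_index' (by simp) (by intro a b c; rw [add_smul]), natR_sum, natR_sum,
      ← hc2, ← hd2]
    simp
  have hz := comb_zero hind _ hsupp hsum
  have hc0 : c = 0 := by
    ext v
    have hv := DFunLike.congr_fun hz v
    simp only [Finsupp.add_apply, natR_apply, Finsupp.zero_apply] at hv
    have h1 : (0 : ℝ) ≤ (c v : ℝ) := by positivity
    have h2 : (0 : ℝ) ≤ (d v : ℝ) := by positivity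
    have : (c v : ℝ) = 0 := by linarith
    exact_mod_cast this
  rw [hc0] at hc2
  simp at hc2
  exact hβ0 hc2

-- Part 4: root positivity lemmas
lemma neg_mem {R : Set V} (hR : IsRootSystem R) {β : V} (hβ : β ∈ R) : -β ∈ R := by
  have := hR.reflect_mem β hβ β hβ
  rwa [show preRefl β β = -β from sr_self β] at this

lemma pos_flip {R S : Set V} (hR : IsRootSystem R) (hS : IsBase R S) {γ β : V} (hγ : γ ∈ S)
    (hβ : β ∈ R) (hpos : NonnegComb S β) (hne : β ≠ γ) :
    sr γ β ∈ R ∧ NonnegComb S (sr γ β) := by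
  classical
  have hγR := hS.subset hγ
  have hmem : sr γ β ∈ R := hR.reflect_mem γ hγR β hβ
  refine ⟨hmem, ?_⟩
  rcases hS.pos_or_neg _ hmem with hp | hn
  · exact hp
  exfalso
  obtain ⟨c, hc, hc2⟩ := hpos
  obtain ⟨e, he, he2⟩ := hn
  have heq : (c.sum fun v n => (n : ℝ) • v) + (1 : ℝ) • (e.sum fun v n => (n : ℝ) • v)
      = cartanInt β γ • γ := by
    rw [one_smul, ← hc2, ← he2]
    show β + -(preRefl γ β) = _
    rw [preRefl]
    abel
  have key := rep_combine hS.indep hγ (cartanInt β γ) c e hc he 1 heq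
  have hsupp : ∀ v, v ≠ γ → c v = 0 := by
    intro v hv
    have hk := key v
    rw [Finsupp.single_apply, if_neg (fun h => hv h.symm)] at hk
    have h1 : (0 : ℝ) ≤ (c v : ℝ) := by positivity
    have h2 : (0 : ℝ) ≤ (e v : ℝ) := by positivity
    have : (c v : ℝ) = 0 := by linarith
    exact_mod_cast this
  have hcs : β = ((c γ : ℝ)) • γ := by
    have hcg : c = Finsupp.single γ (c γ) := by
      ext v
      by_cases hv : v = γ
      · subst hv; simp
      · rw [hsupp v hv, Finsupp.single_apply, if_neg (fun h => hv h.symm)]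
    rw [hc2]
    conv_lhs => rw [hcg]
    rw [Finsupp.sum_single_index (by simp)]
  have hred := hR.reduced γ hγR (c γ : ℝ) (by rw [← hcs]; exact hβ)
  rcases hred with h1 | h1
  · rw [h1, one_smul] at hcs; exact hne hcs
  · have : (0 : ℝ) ≤ (c γ : ℝ) := by positivity
    rw [h1] at this; linarith

-- Part 5: inversion sets and length
def invSet (R S : Set V) (u : V ≃ₗ[ℝ] V) : Set V :=
  {β | β ∈ R ∧ NonnegComb S β ∧ NonnegComb S (-(u β))}

lemma invLength_def (R S : Set V) (u : V ≃ₗ[ℝ] V) :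
    invLength R S u = (invSet R S u).ncard := rfl

lemma invSet_finite {R : Set V} (hR : IsRootSystem R) (S : Set V) (u : V ≃ₗ[ℝ] V) :
    (invSet R S u).Finite := hR.finite.subset (fun β h => h.1)

lemma sr_eq_gamma {S : Set V} (hS : IsBase R S) (hind : LinearIndependent ℝ ((↑) : S → V))
    {γ δ : V} (hγ : γ ∈ S) (hγ0 : γ ≠ 0) (hδpos : NonnegComb S δ) (h : sr γ δ = γ) : False := by
  have hδ : δ = -γ := by
    have := congrArg (sr γ) h
    rwa [sr_sr, sr_self] at this
  exact not_pos_neg hind hγ0 (nonnegComb_mem hγ) (by rwa [hδ] at hδpos)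

lemma length_mul_sr {R S : Set V} (hR : IsRootSystem R) (hS : IsBase R S) {γ : V} (hγ : γ ∈ S)
    (u : V ≃ₗ[ℝ] V) :
    (NonnegComb S (u γ) → invLength R S (u * sr γ) = invLength R S u + 1) ∧
    (NonnegComb S (-(u γ)) → invLength R S u = invLength R S (u * sr γ) + 1) := by
  have hγR := hS.subset hγ
  have hγ0 : γ ≠ 0 := hR.ne_zero γ hγR
  have hγpos := nonnegComb_mem hγ
  have huγ0 : u γ ≠ 0 := fun h => hγ0 (by simpa using (LinearEquiv.map_eq_zero_iff u).mp h)
  set A := invSet R S u \ {γ} with hA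
  have h1 : invSet R S (u * sr γ) \ {γ} = sr γ '' A := by
    ext x
    constructor
    · rintro ⟨⟨hxR, hxpos, hxneg⟩, hxγ⟩
      rw [Set.mem_singleton_iff] at hxγ
      have hflip := pos_flip hR hS hγ hxR hxpos hxγ
      refine ⟨sr γ x, ⟨⟨hflip.1, hflip.2, ?_⟩, ?_⟩, sr_sr γ x⟩
      · exact hxneg
      · rw [Set.mem_singleton_iff]
        exact fun h => sr_eq_gamma hS hS.indep hγ hγ0 hxpos h
    · rintro ⟨δ, ⟨⟨hδR, hδpos, hδneg⟩, hδγ⟩, rfl⟩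
      rw [Set.mem_singleton_iff] at hδγ
      have hflip := pos_flip hR hS hγ hδR hδpos hδγ
      refine ⟨⟨hflip.1, hflip.2, ?_⟩, ?_⟩
      · have : (u * sr γ) (sr γ δ) = u δ := by rw [lmul_apply, sr_sr]
        rwa [this]
      · rw [Set.mem_singleton_iff]
        exact fun h => sr_eq_gamma hS hS.indep hγ hγ0 hδpos h
  have h2 : (γ ∈ invSet R S (u * sr γ)) ↔ NonnegComb S (u γ) := by
    have he : -((u * sr γ) γ) = u γ := by
      rw [lmul_apply, sr_self, map_neg, neg_neg]
    constructor
    · rintro ⟨-, -, h⟩; rwa [he] at h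
    · intro h; exact ⟨hγR, hγpos, by rwa [he]⟩
  have h3 : (γ ∈ invSet R S u) ↔ NonnegComb S (-(u γ)) := by
    constructor
    · rintro ⟨-, -, h⟩; exact h
    · intro h; exact ⟨hγR, hγpos, h⟩
  have hfin1 := invSet_finite hR S (u * sr γ)
  have hfin2 := invSet_finite hR S u
  have himg : (sr γ '' A).ncard = A.ncard :=
    Set.ncard_image_of_injective A (sr γ).injective
  constructor
  · intro hp
    have hnn : ¬ NonnegComb S (-(u γ)) := fun hn => not_pos_neg hS.indep huγ0 hp hn
    have e1 := Set.ncard_diff_singleton_add_one (h2.mpr hp) hfin1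
    have e2 : invSet R S u \ {γ} = invSet R S u :=
      Set.diff_singleton_eq_self (fun h => hnn (h3.mp h))
    rw [invLength_def, invLength_def, ← e1, h1, himg, hA, e2]
  · intro hn
    have hnp : ¬ NonnegComb S (u γ) := fun hp => not_pos_neg hS.indep huγ0 hp hn
    have e1 := Set.ncard_diff_singleton_add_one (h3.mpr hn) hfin2
    have e2 : invSet R S (u * sr γ) \ {γ} = invSet R S (u * sr γ) :=
      Set.diff_singleton_eq_self (fun h => hnp (h2.mp h))
    rw [invLength_def, invLength_def, ← e1, ← himg, ← h1, e2]

-- Part 6: words of simple reflections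
noncomputable def wprod : List V → (V ≃ₗ[ℝ] V) := fun l => (l.map sr).prod

lemma wprod_nil : wprod ([] : List V) = 1 := rfl

lemma wprod_cons (γ : V) (l : List V) : wprod (γ :: l) = sr γ * wprod l := by
  simp [wprod]

lemma wprod_append (l₁ l₂ : List V) : wprod (l₁ ++ l₂) = wprod l₁ * wprod l₂ := by
  simp [wprod]

lemma wprod_concat (l : List V) (γ : V) : wprod (l ++ [γ]) = wprod l * sr γ := by
  simp [wprod]

lemma wprod_mem {R : Set V} {l : List V} (h : ∀ γ ∈ l, γ ∈ R) : wprod l ∈ WeylGroup R := by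
  induction l with
  | nil => rw [wprod_nil]; exact one_mem _
  | cons γ l ih =>
    rw [wprod_cons]
    exact mul_mem (preRefl_mem_weyl (h γ (by simp))) (ih fun x hx => h x (by simp [hx]))

lemma wprod_inv (l : List V) : (wprod l)⁻¹ = wprod l.reverse := by
  induction l with
  | nil => rw [wprod_nil, List.reverse_nil, wprod_nil, inv_one]
  | cons γ l ih =>
    rw [wprod_cons, mul_inv_rev, sr_inv, ih, List.reverse_cons, wprod_concat]

lemma invLength_one {R S : Set V} (hR : IsRootSystem R) (hS : IsBase R S) :
    invLength R S (1 : V ≃ₗ[ℝ] V) = 0 := by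
  rw [invLength_def]
  have h : invSet R S (1 : V ≃ₗ[ℝ] V) = ∅ := by
    ext β
    simp only [invSet, Set.mem_setOf_eq, Set.mem_empty_iff_false, iff_false, not_and]
    intro hβR hp hn
    exact not_pos_neg hS.indep (hR.ne_zero β hβR) hp hn
  rw [h, Set.ncard_empty]

lemma wprod_length_le {R S : Set V} (hR : IsRootSystem R) (hS : IsBase R S) :
    ∀ l : List V, (∀ γ ∈ l, γ ∈ S) → invLength R S (wprod l) ≤ l.length := by
  intro l
  induction l using List.reverseRecOn with
  | nil => intro _; rw [wprod_nil, invLength_one hR hS]; exact Nat.zero_le _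
  | append_singleton l γ ih =>
    intro hl
    have hS' : ∀ x ∈ l, x ∈ S := fun x hx => hl x (by simp [hx])
    have hγ : γ ∈ S := hl γ (by simp)
    have hu : wprod l ∈ WeylGroup R := wprod_mem (fun x hx => hS.subset (hS' x hx))
    have hmem : wprod l γ ∈ R := (weyl_stab hR hu).1 γ (hS.subset hγ)
    have hih := ih hS'
    rw [wprod_concat]
    rw [List.length_append, List.length_singleton]
    rcases hS.pos_or_neg _ hmem with hp | hn
    · rw [(length_mul_sr hR hS hγ (wprod l)).1 hp]
      omega
    · have := (length_mul_sr hR hS hγ (wprod l)).2 hn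
      omega

-- Part 7: generation by simple reflections
lemma inner_self_pos' {x : V} (hx : x ≠ 0) : (0 : ℝ) < ⟪x, x⟫_ℝ := by
  have h1 : (0 : ℝ) ≤ ⟪x, x⟫_ℝ := real_inner_self_nonneg
  have h2 : ⟪x, x⟫_ℝ ≠ 0 := fun h => hx (inner_self_eq_zero.mp h)
  exact lt_of_le_of_ne h1 (Ne.symm h2)

lemma wprod_single (γ : V) : wprod [γ] = sr γ := by simp [wprod]

lemma pos_root_reachable {R S : Set V} (hR : IsRootSystem R) (hS : IsBase R S) :
    ∀ n : ℕ, ∀ β : V, ∀ c : V →₀ ℕ, β ∈ R → ↑c.support ⊆ S →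
      β = (c.sum fun v k => (k : ℝ) • v) → (c.sum fun _ k => k) = n →
      ∃ l γ, (∀ x ∈ l, x ∈ S) ∧ γ ∈ S ∧ β = wprod l γ := by
  intro n
  induction n using Nat.strong_induction_on with
  | _ n ih =>
  intro β c hβR hc hrep hht
  classical
  by_cases hβS : β ∈ S
  · exact ⟨[], β, by simp, hβS, rfl⟩
  have hβ0 : β ≠ 0 := hR.ne_zero β hβR
  have hself : (0 : ℝ) < ⟪β, β⟫_ℝ := inner_self_pos' hβ0
  have h2 : ⟪β, (c.sum fun v k => (k : ℝ) • v)⟫_ℝ = ∑ v ∈ c.support, (c v : ℝ) * ⟪β, v⟫_ℝ := by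
    rw [Finsupp.sum, inner_sum]
    exact Finset.sum_congr rfl fun v _ => real_inner_smul_right β v _
  have hposum : (0 : ℝ) < ∑ v ∈ c.support, (c v : ℝ) * ⟪β, v⟫_ℝ := by
    rw [← h2, ← hrep]; exact hself
  have hex : ∃ v ∈ c.support, (0 : ℝ) < (c v : ℝ) * ⟪β, v⟫_ℝ := by
    by_contra hcon
    push_neg at hcon
    have : ∑ v ∈ c.support, (c v : ℝ) * ⟪β, v⟫_ℝ ≤ 0 :=
      Finset.sum_nonpos hcon
    linarith
  obtain ⟨γ, hγsup, hγlt⟩ := hex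
  have hγS : γ ∈ S := hc hγsup
  have hγR := hS.subset hγS
  have hβγ : 0 < ⟪β, γ⟫_ℝ := by
    nlinarith [show (0:ℝ) ≤ (c γ : ℝ) from by positivity]
  have hβne : β ≠ γ := fun h => hβS (h ▸ hγS)
  have hflip := pos_flip hR hS hγS hβR ⟨c, hc, hrep⟩ hβne
  obtain ⟨d, hd, hd2⟩ := hflip.2
  have hγγ : 0 < ⟪γ, γ⟫_ℝ := inner_self_pos' (hR.ne_zero γ hγR)
  have hm : 0 < cartanInt β γ := by unfold cartanInt; positivity
  obtain ⟨k, hk⟩ := hR.crystallographic γ hγR β hβR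
  have hm1 : (1 : ℝ) ≤ cartanInt β γ := by
    rw [hk] at hm ⊢
    have : (0 : ℤ) < k := by exact_mod_cast hm
    exact_mod_cast this
  have heq : (c.sum fun v k => (k : ℝ) • v) + (-1 : ℝ) • (d.sum fun v k => (k : ℝ) • v)
      = cartanInt β γ • γ := by
    rw [← hrep, ← hd2]
    show β + (-1 : ℝ) • (preRefl γ β) = _
    rw [neg_one_smul, preRefl]
    abel
  have key := rep_combine hS.indep hγS (cartanInt β γ) c d hc hd (-1) heq
  -- compare heights
  set F := (c.support ∪ d.support) ∪ {γ} with hF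
  have hγF : γ ∈ F := by simp [hF]
  have hsumc : ((c.sum fun _ k => k : ℕ) : ℝ) = ∑ v ∈ F, (c v : ℝ) := by
    rw [Finsupp.sum, Nat.cast_sum]
    exact Finset.sum_subset (by intro x hx; simp [hF, hx]) (fun x _ hnx => by
      simp [Finsupp.notMem_support_iff.mp hnx])
  have hsumd : ((d.sum fun _ k => k : ℕ) : ℝ) = ∑ v ∈ F, (d v : ℝ) := by
    rw [Finsupp.sum, Nat.cast_sum]
    exact Finset.sum_subset (by intro x hx; simp [hF, hx]) (fun x _ hnx => by
      simp [Finsupp.notMem_support_iff.mp hnx])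
  have hsingle : ∑ v ∈ F, (Finsupp.single γ (cartanInt β γ) : V →₀ ℝ) v = cartanInt β γ := by
    rw [Finset.sum_eq_single γ]
    · simp
    · intro b _ hbne; rw [Finsupp.single_apply, if_neg (fun h => hbne h.symm)]
    · intro h; exact absurd hγF h
  have hcomp : ((c.sum fun _ k => k : ℕ) : ℝ) = ((d.sum fun _ k => k : ℕ) : ℝ) + cartanInt β γ := by
    rw [hsumc, hsumd, ← hsingle, ← Finset.sum_add_distrib]
    exact Finset.sum_congr rfl fun v _ => by have := key v; linarith
  have hlt : (d.sum fun _ k => k) < n := by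
    rw [← hht]
    have : ((d.sum fun _ k => k : ℕ) : ℝ) + 1 ≤ ((c.sum fun _ k => k : ℕ) : ℝ) := by linarith
    exact_mod_cast this
  obtain ⟨l, γ', hl, hγ', hrep'⟩ := ih _ hlt (sr γ β) d hflip.1 hd hd2 rfl
  refine ⟨γ :: l, γ', ?_, hγ', ?_⟩
  · intro x hx
    rcases List.mem_cons.mp hx with h | h
    · exact h ▸ hγS
    · exact hl x h
  · rw [wprod_cons, lmul_apply, ← hrep', sr_sr]

lemma refl_word {R S : Set V} (hR : IsRootSystem R) (hS : IsBase R S) {β : V} (hβ : β ∈ R) :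
    ∃ l : List V, (∀ x ∈ l, x ∈ S) ∧ sr β = wprod l := by
  suffices h : ∀ β ∈ R, NonnegComb S β → ∃ l, (∀ x ∈ l, x ∈ S) ∧ sr β = wprod l by
    rcases hS.pos_or_neg β hβ with hp | hn
    · exact h β hβ hp
    · obtain ⟨l, hl, he⟩ := h (-β) (neg_mem hR hβ) hn
      refine ⟨l, hl, ?_⟩
      rw [← sr_neg, he]
  intro β hβR hpos
  obtain ⟨c, hc, hrep⟩ := hpos
  obtain ⟨l, γ, hl, hγ, hrep'⟩ := pos_root_reachable hR hS _ β c hβR hc hrep rfl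
  have hW : wprod l ∈ WeylGroup R := wprod_mem (fun x hx => hS.subset (hl x hx))
  refine ⟨l ++ [γ] ++ l.reverse, ?_, ?_⟩
  · intro x hx
    simp only [List.mem_append, List.mem_singleton, List.mem_reverse] at hx
    rcases hx with (h | h) | h
    · exact hl x h
    · exact h ▸ hγ
    · exact hl x h
  · rw [hrep', wprod_append, wprod_append, wprod_single, ← wprod_inv]
    exact (weyl_conj hW γ).symm

lemma weyl_word {R S : Set V} (hR : IsRootSystem R) (hS : IsBase R S) {u : V ≃ₗ[ℝ] V}
    (hu : u ∈ WeylGroup R) : ∃ l, (∀ x ∈ l, x ∈ S) ∧ u = wprod l := by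
  induction hu using Subgroup.closure_induction with
  | mem g hg =>
    obtain ⟨β, hβ, hgβ⟩ := hg
    have hge : g = sr β := LinearEquiv.ext fun x => hgβ x
    rw [hge]
    exact refl_word hR hS hβ
  | one => exact ⟨[], by simp, wprod_nil.symm⟩
  | mul a b _ _ ha hb =>
    obtain ⟨la, hla, ha2⟩ := ha
    obtain ⟨lb, hlb, hb2⟩ := hb
    refine ⟨la ++ lb, ?_, by rw [wprod_append, ha2, hb2]⟩
    intro x hx
    rcases List.mem_append.mp hx with h | h
    · exact hla x h
    · exact hlb x h
  | inv a _ ha =>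
    obtain ⟨la, hla, ha2⟩ := ha
    refine ⟨la.reverse, fun x hx => hla x (List.mem_reverse.mp hx), ?_⟩
    rw [← wprod_inv, ha2]

-- Part 8: root tracking (strong exchange), reduced words, sign lemma
lemma root_track {R S : Set V} (hR : IsRootSystem R) (hS : IsBase R S) :
    ∀ l : List V, ∀ δ : V, (∀ x ∈ l, x ∈ S) → δ ∈ R → NonnegComb S δ →
      NonnegComb S (-(wprod l δ)) →
      ∃ l' : List V, (∀ x ∈ l', x ∈ S) ∧ l'.length + 1 = l.length ∧
        wprod l * sr δ = wprod l' := by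
  intro l
  induction l with
  | nil =>
    intro δ _ hδR hδpos hδneg
    exfalso
    rw [wprod_nil] at hδneg
    exact not_pos_neg hS.indep (hR.ne_zero δ hδR) hδpos hδneg
  | cons γ l ih =>
    intro δ hlS hδR hδpos hδneg
    have hγS : γ ∈ S := hlS γ (by simp)
    have hlS' : ∀ x ∈ l, x ∈ S := fun x hx => hlS x (by simp [hx])
    have hW : wprod l ∈ WeylGroup R := wprod_mem (fun x hx => hS.subset (hlS' x hx))
    have hxR : wprod l δ ∈ R := (weyl_stab hR hW).1 δ hδR
    rw [wprod_cons, lmul_apply] at hδneg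
    rcases hS.pos_or_neg _ hxR with hp | hn
    · -- wprod l δ is positive but sr γ flips it: must equal γ
      have hxγ : wprod l δ = γ := by
        by_contra hne
        have hflip := pos_flip hR hS hγS hxR hp hne
        exact not_pos_neg hS.indep (hR.ne_zero _ hflip.1) hflip.2 hδneg
      refine ⟨l, hlS', by simp, ?_⟩
      have hconj := weyl_conj' hW δ
      rw [hxγ] at hconj
      rw [wprod_cons, mul_assoc, ← hconj, ← mul_assoc, sr_mul_self, one_mul]
    · obtain ⟨l', hl', hlen, heq⟩ := ih δ hlS' hδR hδpos hn
      refine ⟨γ :: l', fun x hx => ?_, by simp [← hlen], ?_⟩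
      · rcases List.mem_cons.mp hx with h | h
        · exact h ▸ hγS
        · exact hl' x h
      · rw [wprod_cons, mul_assoc, heq, ← wprod_cons]

lemma shorten {R S : Set V} (hR : IsRootSystem R) (hS : IsBase R S) :
    ∀ l : List V, (∀ x ∈ l, x ∈ S) → invLength R S (wprod l) < l.length →
      ∃ l' : List V, (∀ x ∈ l', x ∈ S) ∧ l'.length + 2 = l.length ∧ wprod l' = wprod l := by
  intro l
  induction l using List.reverseRecOn with
  | nil => intro _ h; rw [wprod_nil, invLength_one hR hS] at h; simp at h
  | append_singleton l γ ih =>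
    intro hlS hlt
    have hγS : γ ∈ S := hlS γ (by simp)
    have hlS' : ∀ x ∈ l, x ∈ S := fun x hx => hlS x (by simp [hx])
    have hW : wprod l ∈ WeylGroup R := wprod_mem (fun x hx => hS.subset (hlS' x hx))
    have hγR := hS.subset hγS
    have hmem : wprod l γ ∈ R := (weyl_stab hR hW).1 γ hγR
    rcases hS.pos_or_neg _ hmem with hp | hn
    · -- length goes up; recurse into l
      have he := (length_mul_sr hR hS hγS (wprod l)).1 hp
      rw [wprod_concat, he, List.length_append, List.length_singleton] at hlt
      obtain ⟨l', hl', hlen, heq⟩ := ih hlS' (by omega)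
      refine ⟨l' ++ [γ], ?_, ?_, ?_⟩
      · intro x hx
        rcases List.mem_append.mp hx with h | h
        · exact hl' x h
        · rw [List.mem_singleton] at h; exact h ▸ hγS
      · simp only [List.length_append, List.length_singleton]; omega
      · rw [wprod_concat, wprod_concat, heq]
    · -- delete a letter via root tracking
      obtain ⟨l', hl', hlen, heq⟩ := root_track hR hS l γ hlS' hγR (nonnegComb_mem hγS) hn
      refine ⟨l', hl', ?_, ?_⟩
      · simp only [List.length_append, List.length_singleton]; omega
      · rw [wprod_concat, heq]

lemma reduced_word {R S : Set V} (hR : IsRootSystem R) (hS : IsBase R S) {u : V ≃ₗ[ℝ] V}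
    (hu : u ∈ WeylGroup R) :
    ∃ l : List V, (∀ x ∈ l, x ∈ S) ∧ u = wprod l ∧ l.length = invLength R S u := by
  suffices h : ∀ n : ℕ, ∀ l : List V, ∀ u : V ≃ₗ[ℝ] V, l.length = n → (∀ x ∈ l, x ∈ S) →
      u = wprod l → ∃ l', (∀ x ∈ l', x ∈ S) ∧ u = wprod l' ∧ l'.length = invLength R S u by
    obtain ⟨l, hlS, hl⟩ := weyl_word hR hS hu
    exact h l.length l u rfl hlS hl
  intro n
  induction n using Nat.strong_induction_on with
  | _ n ih =>
  intro l u hn hlS hl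
  rcases eq_or_lt_of_le (wprod_length_le hR hS l hlS) with he | hlt
  · exact ⟨l, hlS, hl, by rw [hl]; exact he.symm⟩
  · obtain ⟨l', hl', hlen, heq⟩ := shorten hR hS l hlS hlt
    exact ih l'.length (by omega) l' u rfl hl' (by rw [hl, heq])

lemma len_lt_of_neg {R S : Set V} (hR : IsRootSystem R) (hS : IsBase R S) {u : V ≃ₗ[ℝ] V}
    (hu : u ∈ WeylGroup R) {γ : V} (hγ : γ ∈ R) (hpos : NonnegComb S γ)
    (hneg : NonnegComb S (-(u γ))) : invLength R S (u * sr γ) < invLength R S u := by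
  obtain ⟨l, hlS, hl, hlen⟩ := reduced_word hR hS hu
  rw [hl] at hneg
  obtain ⟨l', hl', hlen', heq⟩ := root_track hR hS l γ hlS hγ hpos hneg
  have hle := wprod_length_le hR hS l' hl'
  rw [← heq, ← hl] at hle
  omega

lemma len_lt_of_pos {R S : Set V} (hR : IsRootSystem R) (hS : IsBase R S) {u : V ≃ₗ[ℝ] V}
    (hu : u ∈ WeylGroup R) {γ : V} (hγ : γ ∈ R) (hpos : NonnegComb S γ)
    (hup : NonnegComb S (u γ)) : invLength R S u < invLength R S (u * sr γ) := by
  have hu' : u * sr γ ∈ WeylGroup R := mul_mem hu (preRefl_mem_weyl hγ)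
  have hneg : NonnegComb S (-((u * sr γ) γ)) := by
    have : (u * sr γ) γ = -(u γ) := by rw [lmul_apply, sr_self, map_neg]
    rw [this, neg_neg]
    exact hup
  have := len_lt_of_neg hR hS hu' hγ hpos hneg
  rwa [mul_assoc, sr_mul_self, mul_one] at this

-- Part 9: Bruhat order lemmas
lemma step_of_pos {R S : Set V} (hR : IsRootSystem R) (hS : IsBase R S) {u : V ≃ₗ[ℝ] V} {γ : V}
    (hu : u ∈ WeylGroup R) (hγR : γ ∈ R) (hγpos : NonnegComb S γ)
    (hup : NonnegComb S (u γ)) : BruhatStep R S u (u * sr γ) :=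
  ⟨sr γ, ⟨γ, hγR, fun _ => rfl⟩, rfl, len_lt_of_pos hR hS hu hγR hγpos hup⟩

lemma bruhatLE_mem {R S : Set V} {u x : V ≃ₗ[ℝ] V} (h : BruhatLE R S u x)
    (hu : u ∈ WeylGroup R) : x ∈ WeylGroup R := by
  induction h with
  | refl => exact hu
  | tail h1 h2 ih =>
    obtain ⟨t, ⟨β, hβ, ht⟩, heq, -⟩ := h2
    have hts : t = sr β := LinearEquiv.ext fun x => ht x
    rw [heq, hts]
    exact mul_mem ih (preRefl_mem_weyl hβ)

lemma step_data {R S : Set V} (hR : IsRootSystem R) (hS : IsBase R S) {x w : V ≃ₗ[ℝ] V}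
    (h : BruhatStep R S x w) :
    ∃ γ, γ ∈ R ∧ NonnegComb S γ ∧ w = x * sr γ ∧ invLength R S x < invLength R S w := by
  obtain ⟨t, ⟨β, hβ, ht⟩, heq, hlen⟩ := h
  have hts : t = sr β := LinearEquiv.ext fun x => ht x
  rcases hS.pos_or_neg β hβ with hp | hn
  · exact ⟨β, hβ, hp, by rw [heq, hts], hlen⟩
  · exact ⟨-β, neg_mem hR hβ, hn, by rw [heq, hts, ← sr_neg], hlen⟩

lemma one_step {R S : Set V} (hR : IsRootSystem R) (hS : IsBase R S) {α : V} (hα : α ∈ S)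
    {x w : V ≃ₗ[ℝ] V} (hx : x ∈ WeylGroup R) (h : BruhatStep R S x w) :
    BruhatLE R S (sr α * x) w ∨ BruhatLE R S (sr α * x) (sr α * w) := by
  obtain ⟨γ, hγR, hγpos, hw, hlen⟩ := step_data hR hS h
  have hαR := hS.subset hα
  have hxγR : x γ ∈ R := (weyl_stab hR hx).1 γ hγR
  have hxγpos : NonnegComb S (x γ) := by
    rcases hS.pos_or_neg _ hxγR with hp | hn
    · exact hp
    · exfalso
      have := len_lt_of_neg hR hS hx hγR hγpos hn
      rw [← hw] at this
      omega
  have hδR : x⁻¹ α ∈ R := (weyl_stab hR hx).2 α hαR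
  have happ : x (x⁻¹ α) = α := by rw [linv_eq_symm]; exact x.apply_symm_apply α
  have hz : sr α * x ∈ WeylGroup R := mul_mem (preRefl_mem_weyl hαR) hx
  rcases hS.pos_or_neg _ hδR with hδp | hδn
  · by_cases hxγα : x γ = α
    · left
      have hconj := weyl_conj' hx γ
      rw [hxγα] at hconj
      rw [hconj, ← hw]
      exact Relation.ReflTransGen.refl
    · right
      have hflip := pos_flip hR hS hα hxγR hxγpos hxγα
      have hstep := step_of_pos hR hS hz hγR hγpos
        (by rw [lmul_apply]; exact hflip.2)
      have he : (sr α * x) * sr γ = sr α * w := by rw [hw, mul_assoc]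
      rw [he] at hstep
      exact Relation.ReflTransGen.single hstep
  · left
    set δ := -(x⁻¹ α) with hδ
    have hδR' : δ ∈ R := neg_mem hR hδR
    have hδpos : NonnegComb S δ := hδn
    have hconj : sr α * x = x * sr δ := by
      have h1 := weyl_conj' hx (x⁻¹ α)
      rw [happ] at h1
      rw [hδ, sr_neg]
      exact h1
    have hxδ : x δ = -α := by rw [hδ, map_neg, happ]
    have huδ : (sr α * x) δ = α := by
      rw [hconj, lmul_apply, sr_self, map_neg, hxδ, neg_neg]
    have hstep : BruhatStep R S (sr α * x) x := by
      have hs := step_of_pos hR hS hz hδR' hδpos (by rw [huδ]; exact nonnegComb_mem hα)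
      have he : (sr α * x) * sr δ = x := by rw [hconj, mul_assoc, sr_mul_self, mul_one]
      rwa [he] at hs
    exact (Relation.ReflTransGen.single hstep).tail h

lemma lifting {R S : Set V} (hR : IsRootSystem R) (hS : IsBase R S) {α : V} (hα : α ∈ S)
    {u w : V ≃ₗ[ℝ] V} (hu : u ∈ WeylGroup R) (h : BruhatLE R S u w) :
    BruhatLE R S (sr α * u) w ∨ BruhatLE R S (sr α * u) (sr α * w) := by
  induction h with
  | refl => exact Or.inr Relation.ReflTransGen.refl
  | tail h1 h2 ih =>
    rcases ih with h3 | h3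
    · exact Or.inl (h3.tail h2)
    · have hxW := bruhatLE_mem h1 hu
      rcases one_step hR hS hα hxW h2 with h4 | h4
      · exact Or.inl (h3.trans h4)
      · exact Or.inr (h3.trans h4)

/-- If `β ∈ R⁺` satisfies `v⁻¹(β) ∈ R⁺` for every `v ≤ w` in Bruhat order,
and `α` is a simple root with `ℓ(s_α w) = ℓ(w) - 1`, then `β ≠ α` and for every
`v' ≤ s_α w`, both `v'⁻¹(β)` and `v'⁻¹(s_α(β))` are positive roots. -/
theorem inversion_stability_under_bruhat
    {R S : Set V} (hR : IsRootSystem R) (hS : IsBase R S)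
    {w : V ≃ₗ[ℝ] V} (hw : w ∈ WeylGroup R)
    {β : V} (hβ : β ∈ R) (hβpos : NonnegComb S β)
    (hall : ∀ v : V ≃ₗ[ℝ] V, v ∈ WeylGroup R → BruhatLE R S v w →
      v.symm β ∈ R ∧ NonnegComb S (v.symm β))
    {α : V} (hα : α ∈ S) {sα : V ≃ₗ[ℝ] V} (hsα : ∀ x, sα x = preRefl α x)
    (hlen : invLength R S (sα * w) + 1 = invLength R S w) :
    β ≠ α ∧ ∀ v' : V ≃ₗ[ℝ] V, v' ∈ WeylGroup R → BruhatLE R S v' (sα * w) →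
      (v'.symm β ∈ R ∧ NonnegComb S (v'.symm β)) ∧
      (v'.symm (preRefl α β) ∈ R ∧ NonnegComb S (v'.symm (preRefl α β))) := by
  have hsre : sα = sr α := LinearEquiv.ext fun x => hsα x
  rw [hsre] at hlen
  have hαR := hS.subset hα
  have hα0 : α ≠ 0 := hR.ne_zero α hαR
  have hδR : w⁻¹ α ∈ R := (weyl_stab hR hw).2 α hαR
  have happ : w (w⁻¹ α) = α := by rw [linv_eq_symm]; exact w.apply_symm_apply α
  have hconj : sr α * w = w * sr (w⁻¹ α) := by
    have h1 := weyl_conj' hw (w⁻¹ α)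
    rw [happ] at h1
    exact h1
  have hδneg : NonnegComb S (-(w⁻¹ α)) := by
    rcases hS.pos_or_neg _ hδR with hp | hn
    · exfalso
      have hlt := len_lt_of_pos hR hS hw hδR hp (by rw [happ]; exact nonnegComb_mem hα)
      rw [← hconj] at hlt
      omega
    · exact hn
  have hwβ := hall w hw Relation.ReflTransGen.refl
  have hβα : β ≠ α := by
    intro h
    have hδneg' : NonnegComb S (-(w.symm β)) := by rw [h, ← linv_eq_symm]; exact hδneg
    have h0 : w.symm β ≠ 0 := by
      intro h0
      have hβ0 : β = 0 := by rw [← w.apply_symm_apply β, h0, map_zero]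
      exact hR.ne_zero β hβ hβ0
    exact not_pos_neg hS.indep h0 hwβ.2 hδneg'
  have hswW : sr α * w ∈ WeylGroup R := mul_mem (preRefl_mem_weyl hαR) hw
  have hstep : BruhatStep R S (sr α * w) w := by
    set δ := -(w⁻¹ α) with hδ
    have hδR' : δ ∈ R := neg_mem hR hδR
    have hconj2 : sr α * w = w * sr δ := by rw [hδ, sr_neg]; exact hconj
    have huδ : (sr α * w) δ = α := by
      rw [hconj2, lmul_apply, sr_self, hδ, neg_neg, happ]
    have hs := step_of_pos hR hS hswW hδR' hδneg (by rw [huδ]; exact nonnegComb_mem hα)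
    have he : (sr α * w) * sr δ = w := by rw [hconj2, mul_assoc, sr_mul_self, mul_one]
    rwa [he] at hs
  refine ⟨hβα, ?_⟩
  intro v' hv' hle
  rw [hsre] at hle
  have hle_w : BruhatLE R S v' w := hle.tail hstep
  refine ⟨hall v' hv' hle_w, ?_⟩
  have hlift := lifting hR hS hα hv' hle
  have h2 : BruhatLE R S (sr α * v') w := by
    rcases hlift with h | h
    · exact h.tail hstep
    · have he : sr α * (sr α * w) = w := by rw [← mul_assoc, sr_mul_self, one_mul]
      rwa [he] at h
  have hsv : sr α * v' ∈ WeylGroup R := mul_mem (preRefl_mem_weyl hαR) hv'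
  have hres := hall _ hsv h2
  have he : (sr α * v').symm β = v'.symm (preRefl α β) := by
    rw [← linv_eq_symm, mul_inv_rev, sr_inv, lmul_apply, linv_eq_symm]
    rfl
  rwa [he] at hres
end
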